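/- arXiv:2512.14221 — 3 statements merged into one kernel-verified Lean document; each statement's English description precedes it below -/
import Mathlib

section
/- Let d, n ≥ 1, α ∈ (0,1), and let s : X_NA × ℝ → ℝ be measurable. On a common probability space, let (X̂^1,Y^1), …, (X̂^n,Y^n) be i.i.d. random pairs with law Q on ℝ^d × ℝ, and let (X^{n+1}, M^{n+1}, Y^{n+1}), taking values in ℝ^d × {0,1}^d × ℝ, be independent of them. Fix m ∈ {0,1}^d with P(M^{n+1} = m) > 0. Let P*_m denote the conditional law of (mask(X^{n+1}, m), Y^{n+1}) given the event {M^{n+1} = m}, and let Q*_m denote the law of (mask(X̂^1, m), Y^1); assume P*_m is absolutely continuous with respect to Q*_m, with Radon–Nikodym density ω_m : X_NA × ℝ → [0,∞). For i ≤ n set S^i_m := s(mask(X̂^i, m), Y^i) and ω^i := ω_m(mask(X̂^i, m), Y^i), and for (x̃, y) ∈ X_NA × ℝ define the weights W^i(x̃,y) := ω^i / (Σ_{j=1}^n ω^j + ω_m(x̃,y)) for i ≤ n and W^{n+1}(x̃,y) := ω_m(x̃,y) / (Σ_{j=1}^n ω^j + ω_m(x̃,y)) (with the convention that the weighted quantile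 below is +∞ when the denominator is 0). Define the weighted split conformal prediction set Ĉ(x̃) := { y ∈ ℝ : s(x̃, y) ≤ Quantile_{1−α}( Σ_{i=1}^n W^i(x̃,y) δ_{S^i_m} + W^{n+1}(x̃,y) δ_{+∞} ) }. Then P( Y^{n+1} ∈ Ĉ(mask(X^{n+1}, M^{n+1})) | M^{n+1} = m ) ≥ 1 − α. -/
open MeasureTheory ProbabilityTheory
open scoped ENNReal

universe u

/-- Measurable space structure on `Option α`, via the identification with `α ⊕ PUnit`. -/
instance optionMeasurableSpace {α : Type u} [MeasurableSpace α] : MeasurableSpace (Option α) :=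
  MeasurableSpace.comap (Equiv.optionEquivSumPUnit.{0, u} α) inferInstance

/-- The `β`-quantile of the discrete distribution `∑ i, w i · δ_{v i}` on `ℝ ∪ {+∞}`:
`inf { z ∈ ℝ : ∑_{i : v i ≤ z} w i ≥ β }`, with `inf ∅ = +∞`. -/
noncomputable def wQuantile {ι : Type*} [Fintype ι] (β : ℝ) (w : ι → ℝ) (v : ι → EReal) : EReal :=
  sInf {z : EReal | ∃ r : ℝ, z = (r : EReal) ∧
    β ≤ ∑ i ∈ Finset.univ.filter (fun i => v i ≤ (r : EReal)), w i}

/-- Total variation distance between two measures. -/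
noncomputable def tvDist {Z : Type*} [MeasurableSpace Z] (P Q : Measure Z) : ℝ :=
  ⨆ A : {A : Set Z // MeasurableSet A}, |(P A.1).toReal - (Q A.1).toReal|

/-- The mask operator: coordinate `j` is `NA` (i.e. `none`) if `m j = true`, else `x j`. -/
def maskOp {d : ℕ} (x : Fin d → ℝ) (m : Fin d → Bool) : Fin d → Option ℝ :=
  fun j => if m j then none else some (x j)

/-- The `β`-quantile of `(∑_{i=1}^n δ_{sc i} + δ_{+∞})/(n+1)`. -/
noncomputable def splitQuantile {n : ℕ} (β : ℝ) (sc : Fin n → ℝ) : EReal :=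
  wQuantile β (fun _ : Option (Fin n) => 1 / (n + 1 : ℝ))
    (fun i => i.elim (⊤ : EReal) (fun j => ((sc j : ℝ) : EReal)))

/-! ### Auxiliary deterministic lemmas about `wQuantile` -/

section Det
variable {ι : Type*} [Fintype ι]

lemma wQuantile_mono {β : ℝ} {w : ι → ℝ} (hw : ∀ i, 0 ≤ w i) {v v' : ι → EReal}
    (h : ∀ i, v i ≤ v' i) : wQuantile β w v ≤ wQuantile β w v' := by
  apply sInf_le_sInf
  rintro z ⟨r, rfl, hr⟩
  refine ⟨r, rfl, hr.trans ?_⟩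
  apply Finset.sum_le_sum_of_subset_of_nonneg
  · intro i hi
    simp only [Finset.mem_filter, Finset.mem_univ, true_and] at *
    exact (h i).trans hi
  · exact fun i _ _ => hw i

lemma wQuantile_comp_equiv (β : ℝ) (w : ι → ℝ) (v : ι → EReal) (σ : Equiv.Perm ι) :
    wQuantile β (fun i => w (σ i)) (fun i => v (σ i)) = wQuantile β w v := by
  unfold wQuantile
  congr 1
  ext z
  have hsum : ∀ r : ℝ,
      ∑ i ∈ Finset.univ.filter (fun i => v (σ i) ≤ (r : EReal)), w (σ i)
        = ∑ i ∈ Finset.univ.filter (fun i => v i ≤ (r : EReal)), w i := by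
    intro r
    refine Finset.sum_equiv σ (fun i => ?_) (fun i _ => rfl)
    simp
  constructor <;> rintro ⟨r, rfl, hr⟩ <;> exact ⟨r, rfl, by rw [hsum] at *; assumption⟩

lemma mass_above_wQuantile {β : ℝ} (hβ0 : 0 < β) (hβ1 : β ≤ 1) [Nonempty ι] (w : ι → ℝ)
    (hw : ∀ i, 0 ≤ w i) (hws : ∑ i, w i = 1) (v : ι → ℝ) :
    ∑ i ∈ Finset.univ.filter
      (fun i => wQuantile β w (fun j => ((v j : ℝ) : EReal)) < ((v i : ℝ) : EReal)), w i
      ≤ 1 - β := by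
  classical
  set F : ℝ → ℝ := fun r => ∑ i ∈ Finset.univ.filter (fun i => ((v i : ℝ) : EReal) ≤ (r : EReal)), w i with hF
  set S : Set EReal := {z : EReal | ∃ r : ℝ, z = (r : EReal) ∧ β ≤ F r} with hS
  have hq : wQuantile β w (fun j => ((v j : ℝ) : EReal)) = sInf S := rfl
  obtain ⟨i0, -, hi0⟩ := Finset.exists_max_image Finset.univ v ⟨Classical.arbitrary ι, Finset.mem_univ _⟩
  obtain ⟨i1, -, hi1⟩ := Finset.exists_min_image Finset.univ v ⟨Classical.arbitrary ι, Finset.mem_univ _⟩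
  have hFtop : F (v i0) = 1 := by
    rw [hF, ← hws]
    apply Finset.sum_congr _ (fun _ _ => rfl)
    rw [Finset.filter_true_of_mem]
    intro i _
    exact_mod_cast hi0 i (Finset.mem_univ i)
  have hmem : ((v i0 : ℝ) : EReal) ∈ S := ⟨v i0, rfl, by rw [hFtop]; exact hβ1⟩
  have hle : sInf S ≤ ((v i0 : ℝ) : EReal) := sInf_le hmem
  have hge : ((v i1 : ℝ) : EReal) ≤ sInf S := by
    apply le_sInf
    rintro z ⟨r, rfl, hr⟩
    have : ∃ i, v i ≤ r := by
      by_contra hc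
      push_neg at hc
      have : F r = 0 := by
        rw [hF]
        apply Finset.sum_eq_zero
        intro i hi
        simp only [Finset.mem_filter, EReal.coe_le_coe_iff] at hi
        exact absurd hi.2 (not_le.2 (hc i))
      rw [this] at hr; linarith
    obtain ⟨i, hi⟩ := this
    exact_mod_cast (hi1 i (Finset.mem_univ i)).trans hi
  obtain ⟨qr, hqr⟩ : ∃ r : ℝ, sInf S = (r : EReal) := by
    induction' hq' : sInf S using EReal.rec with r
    · rw [hq'] at hge; exact absurd hge (by simp)
    · exact ⟨_, rfl⟩
    · rw [hq'] at hle; exact absurd hle (by simp)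
  have hkey : β ≤ F qr := by
    by_cases hA : (Finset.univ.filter (fun i => qr < v i)).Nonempty
    · obtain ⟨j0, hj0mem, hj0⟩ := Finset.exists_min_image _ v hA
      have hj0gt : qr < v j0 := by simpa using (Finset.mem_filter.1 hj0mem).2
      set δ : ℝ := v j0 - qr with hδ
      have hδpos : 0 < δ := by simp [hδ, sub_pos, hj0gt]
      have hlt : sInf S < ((qr + δ : ℝ) : EReal) := by
        rw [hqr]; exact_mod_cast (by linarith : qr < qr + δ)
      obtain ⟨z, hzS, hz⟩ := sInf_lt_iff.1 hlt
      have hrge0 : sInf S ≤ z := sInf_le hzS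
      obtain ⟨r, rfl, hr⟩ := hzS
      have hrlt : r < qr + δ := by exact_mod_cast hz
      have hrge : qr ≤ r := by
        rw [hqr] at hrge0
        exact_mod_cast hrge0
      have : F r = F qr := by
        rw [hF]
        apply Finset.sum_congr _ (fun _ _ => rfl)
        apply Finset.filter_congr
        intro i _
        simp only [EReal.coe_le_coe_iff]
        constructor
        · intro h
          by_contra hc
          push_neg at hc
          have h2 : v j0 ≤ v i := hj0 i (Finset.mem_filter.2 ⟨Finset.mem_univ i, hc⟩)
          have : qr + δ ≤ v i := by rw [hδ]; linarith
          linarith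
        · intro h; linarith
      rw [← this]; exact hr
    · have : Finset.univ.filter (fun i => ((v i : ℝ) : EReal) ≤ ((qr : ℝ) : EReal)) = Finset.univ := by
        rw [Finset.filter_true_of_mem]
        intro i _
        rw [Finset.not_nonempty_iff_eq_empty, Finset.filter_eq_empty_iff] at hA
        have := hA (Finset.mem_univ i)
        push_neg at this
        exact_mod_cast this
      rw [hF]
      simp only
      rw [this, hws]
      exact hβ1
  have hsplit := Finset.sum_filter_add_sum_filter_not Finset.univ
    (fun i => ((v i : ℝ) : EReal) ≤ ((qr : ℝ) : EReal)) w
  rw [hws] at hsplit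
  have hset : Finset.univ.filter
      (fun i => wQuantile β w (fun j => ((v j : ℝ) : EReal)) < ((v i : ℝ) : EReal))
      = Finset.univ.filter (fun i => ¬ (((v i : ℝ) : EReal) ≤ ((qr : ℝ) : EReal))) := by
    apply Finset.filter_congr
    intro i _
    rw [hq, hqr]
    simp [not_le]
  rw [hset]
  have : F qr + ∑ i ∈ Finset.univ.filter (fun i => ¬ (((v i : ℝ) : EReal) ≤ ((qr : ℝ) : EReal))), w i = 1 := hsplit
  linarith

/-- unnormalized version, allowing total mass zero -/
lemma mass_above_wQuantile' {β : ℝ} (hβ0 : 0 < β) (hβ1 : β ≤ 1) [Nonempty ι] (w : ι → ℝ)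
    (hw : ∀ i, 0 ≤ w i) (v : ι → ℝ) :
    ∑ i ∈ Finset.univ.filter
      (fun i => wQuantile β (fun j => w j / ∑ k, w k) (fun j => ((v j : ℝ) : EReal))
        < ((v i : ℝ) : EReal)), w i
      ≤ (1 - β) * ∑ k, w k := by
  classical
  rcases eq_or_lt_of_le (Finset.sum_nonneg (fun i _ => hw i)) with hD | hD
  · have hz : ∀ i, w i = 0 := by
      intro i
      have := (Finset.sum_eq_zero_iff_of_nonneg (fun i _ => hw i)).1 hD.symm
      exact this i (Finset.mem_univ i)
    simp [hz]
  · set D := ∑ k, w k with hDdef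
    have h1 := mass_above_wQuantile hβ0 hβ1 (fun j => w j / D)
      (fun i => div_nonneg (hw i) hD.le)
      (by rw [← Finset.sum_div]; exact div_self hD.ne') v
    calc ∑ i ∈ Finset.univ.filter
          (fun i => wQuantile β (fun j => w j / D) (fun j => ((v j : ℝ) : EReal))
            < ((v i : ℝ) : EReal)), w i
        = D * ∑ i ∈ Finset.univ.filter
          (fun i => wQuantile β (fun j => w j / D) (fun j => ((v j : ℝ) : EReal))
            < ((v i : ℝ) : EReal)), (w i / D) := by
          rw [Finset.mul_sum]
          apply Finset.sum_congr rfl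
          intro i _
          field_simp
      _ ≤ D * (1 - β) := by
          apply mul_le_mul_of_nonneg_left h1 hD.le
      _ = (1 - β) * D := mul_comm _ _

/-- rational infimum representation -/
lemma wQuantile_eq_iInf (β : ℝ) (w : ι → ℝ) (hw : ∀ i, 0 ≤ w i) (v : ι → EReal) :
    wQuantile β w v = ⨅ q : ℚ,
      (if β ≤ ∑ i ∈ Finset.univ.filter (fun i => v i ≤ ((q : ℝ) : EReal)), w i
        then (((q : ℝ) : ℝ) : EReal) else ⊤) := by
  classical
  apply le_antisymm
  · apply le_iInf
    intro q
    split_ifs with h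
    · exact sInf_le ⟨(q : ℝ), rfl, h⟩
    · exact le_top
  · apply le_sInf
    rintro z ⟨r, rfl, hr⟩
    have key : ∀ q : ℚ, r < (q : ℝ) →
        (⨅ q : ℚ, (if β ≤ ∑ i ∈ Finset.univ.filter (fun i => v i ≤ ((q : ℝ) : EReal)), w i
          then (((q : ℝ) : ℝ) : EReal) else ⊤)) ≤ (((q : ℝ) : ℝ) : EReal) := by
      intro q hq
      have hmono : β ≤ ∑ i ∈ Finset.univ.filter (fun i => v i ≤ ((q : ℝ) : EReal)), w i := by
        refine hr.trans (Finset.sum_le_sum_of_subset_of_nonneg ?_ (fun i _ _ => hw i))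
        intro i hi
        simp only [Finset.mem_filter, Finset.mem_univ, true_and] at *
        exact hi.trans (by exact_mod_cast hq.le)
      exact iInf_le_of_le q (by rw [if_pos hmono])
    by_contra hc
    push_neg at hc
    obtain ⟨x, hx1, hx2⟩ := EReal.exists_rat_btwn_of_lt hc
    exact absurd ((key x (by exact_mod_cast hx1)).trans_lt hx2) (lt_irrefl _)

lemma measurable_wQuantile {γ : Type*} [MeasurableSpace γ] (β : ℝ)
    (w : γ → ι → ℝ) (v : γ → ι → EReal)
    (hwm : ∀ i, Measurable (fun g => w g i)) (hw : ∀ g i, 0 ≤ w g i)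
    (hvm : ∀ i, Measurable (fun g => v g i)) :
    Measurable (fun g => wQuantile β (w g) (v g)) := by
  classical
  have : (fun g => wQuantile β (w g) (v g)) = fun g => ⨅ q : ℚ,
      (if β ≤ ∑ i ∈ Finset.univ.filter (fun i => v g i ≤ ((q : ℝ) : EReal)), w g i
        then (((q : ℝ) : ℝ) : EReal) else ⊤) := by
    funext g
    exact wQuantile_eq_iInf β (w g) (hw g) (v g)
  rw [this]
  apply Measurable.iInf
  intro q
  have hsum : Measurable (fun g =>
      ∑ i ∈ Finset.univ.filter (fun i => v g i ≤ ((q : ℝ) : EReal)), w g i) := by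
    have : ∀ g, ∑ i ∈ Finset.univ.filter (fun i => v g i ≤ ((q : ℝ) : EReal)), w g i
        = ∑ i : ι, (if v g i ≤ ((q : ℝ) : EReal) then w g i else 0) := by
      intro g; rw [Finset.sum_filter]
    simp_rw [this]
    apply Finset.measurable_sum
    intro i _
    exact Measurable.ite (measurableSet_le (hvm i) measurable_const) (hwm i) measurable_const
  exact Measurable.ite (measurableSet_le measurable_const hsum) measurable_const measurable_const

end Det

/-! ### Measure-theoretic plumbing -/

section Plumb
variable {Z : Type*} [MeasurableSpace Z] (ν : Measure Z) [IsProbabilityMeasure ν]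

/-- permutation invariance of iid product measure -/
lemma pi_map_perm {ι : Type*} [Fintype ι] (σ : Equiv.Perm ι) :
    MeasurePreserving (fun z : ι → Z => fun i => z (σ i))
      (Measure.pi fun _ => ν) (Measure.pi fun _ => ν) := by
  classical
  constructor
  · exact measurable_pi_lambda _ (fun i => measurable_pi_apply (σ i))
  · refine (Measure.pi_eq fun s hs => ?_).symm
    rw [Measure.map_apply (measurable_pi_lambda _ (fun i => measurable_pi_apply (σ i)))
      (MeasurableSet.univ_pi hs)]
    have hpre : (fun z : ι → Z => fun i => z (σ i)) ⁻¹' (Set.pi Set.univ s)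
        = Set.pi Set.univ (fun j => s (σ.symm j)) := by
      ext z
      simp only [Set.mem_preimage, Set.mem_pi, Set.mem_univ, true_implies]
      constructor
      · intro h j; simpa using h (σ.symm j)
      · intro h i; simpa using h (σ i)
    rw [hpre, Measure.pi_pi]
    exact Equiv.prod_comp σ.symm (fun j => ν (s j))

/-- glue map -/
lemma map_glue_pi (n : ℕ) :
    MeasurePreserving (fun p : (Fin n → Z) × Z => fun o : Option (Fin n) => o.elim p.2 p.1)
      ((Measure.pi fun _ : Fin n => ν).prod ν) (Measure.pi fun _ : Option (Fin n) => ν) := by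
  classical
  have hmeas : Measurable (fun p : (Fin n → Z) × Z => fun o : Option (Fin n) => o.elim p.2 p.1) := by
    apply measurable_pi_lambda
    rintro (_ | i)
    · exact measurable_snd
    · exact (measurable_pi_apply i).comp measurable_fst
  constructor
  · exact hmeas
  · refine (Measure.pi_eq fun s hs => ?_).symm
    rw [Measure.map_apply hmeas (MeasurableSet.univ_pi hs)]
    have hpre : (fun p : (Fin n → Z) × Z => fun o : Option (Fin n) => o.elim p.2 p.1) ⁻¹'
        (Set.pi Set.univ s)
        = (Set.pi Set.univ (fun i => s (some i))) ×ˢ (s none) := by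
      ext ⟨f, b⟩
      simp only [Set.mem_preimage, Set.mem_pi, Set.mem_univ, true_implies, Set.mem_prod]
      constructor
      · intro h
        exact ⟨fun i => h (some i), h none⟩
      · rintro ⟨h1, h2⟩ (_ | i)
        · exact h2
        · exact h1 i
    rw [hpre, Measure.prod_prod, Measure.pi_pi, Fintype.prod_option, mul_comm]

/-- pushforward of withDensity along a measurable map, when the density factors -/
lemma map_withDensity_comp {A B : Type*} [MeasurableSpace A] [MeasurableSpace B]
    (κ : Measure A) (f : A → B) (hf : Measurable f) (h : B → ℝ≥0∞) (hh : Measurable h) :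
    Measure.map f (κ.withDensity (h ∘ f)) = (Measure.map f κ).withDensity h := by
  ext s hs
  rw [Measure.map_apply hf hs, withDensity_apply _ (hf hs), withDensity_apply _ hs,
    setLIntegral_map hs hh hf]
  rfl

/-- product with a withDensity second factor -/
lemma prod_withDensity {A B : Type*} [MeasurableSpace A] [MeasurableSpace B]
    (κ : Measure A) [SigmaFinite κ] (νB : Measure B) [SigmaFinite νB]
    (g : B → ℝ≥0∞) (hg : Measurable g) :
    κ.prod (νB.withDensity g) = (κ.prod νB).withDensity (fun p => g p.2) := by
  ext s hs
  rw [Measure.prod_apply hs, withDensity_apply _ hs]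
  have h1 : ∀ a, (νB.withDensity g) (Prod.mk a ⁻¹' s) = ∫⁻ b in Prod.mk a ⁻¹' s, g b ∂νB :=
    fun a => withDensity_apply _ (measurable_prodMk_left hs)
  simp_rw [h1]
  rw [← lintegral_indicator hs (fun p : A × B => g p.2),
    MeasureTheory.lintegral_prod (s.indicator fun p : A × B => g p.2)
      (((hg.comp measurable_snd).indicator hs).aemeasurable)]
  apply lintegral_congr
  intro a
  rw [← lintegral_indicator (measurable_prodMk_left hs) g]
  apply lintegral_congr
  intro b
  by_cases hb : (a, b) ∈ s
  · rw [Set.indicator_of_mem (show b ∈ Prod.mk a ⁻¹' s from hb) g,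
      Set.indicator_of_mem hb (fun p : A × B => g p.2)]
  · rw [Set.indicator_of_notMem (show b ∉ Prod.mk a ⁻¹' s from hb) g,
      Set.indicator_of_notMem hb (fun p : A × B => g p.2)]

lemma map_eval_pi' {ι : Type*} [Fintype ι] (o : ι) :
    Measure.map (fun z : ι → Z => z o) (Measure.pi fun _ => ν) = ν := by
  classical
  ext s hs
  rw [Measure.map_apply (measurable_pi_apply o) hs]
  have h1 : (fun z : ι → Z => z o) ⁻¹' s
      = Set.pi Set.univ (Function.update (fun _ => Set.univ) o s) := Set.eval_preimage
  rw [h1, Measure.pi_pi]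
  rw [Finset.prod_eq_single_of_mem o (Finset.mem_univ o)
    (fun j _ hj => by simp [Function.update_of_ne hj])]
  rw [Function.update_self]

lemma pi_map_comp {β : Type*} [MeasurableSpace β] (Q : Measure β) [IsProbabilityMeasure Q]
    {ι : Type*} [Fintype ι] (φ : β → Z) (hφ : Measurable φ) :
    Measure.map (fun f : ι → β => fun i => φ (f i)) (Measure.pi fun _ => Q)
      = Measure.pi (fun _ => Measure.map φ Q) := by
  classical
  haveI : ∀ i : ι, SigmaFinite ((fun _ : ι => Measure.map φ Q) i) := fun _ =>
    have : IsProbabilityMeasure (Measure.map φ Q) := Measure.isProbabilityMeasure_map hφ.aemeasurable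
    inferInstance
  refine (Measure.pi_eq fun s hs => ?_).symm
  rw [Measure.map_apply
    (show Measurable (fun f : ι → β => fun i => φ (f i)) from
      measurable_pi_lambda _ (fun i => hφ.comp (measurable_pi_apply i)))
    (MeasurableSet.univ_pi hs)]
  have h1 : (fun f : ι → β => fun i => φ (f i)) ⁻¹' (Set.pi Set.univ s)
      = Set.pi Set.univ (fun i => φ ⁻¹' (s i)) := by
    ext f; simp [Set.mem_pi]
  rw [h1, Measure.pi_pi]
  exact Finset.prod_congr rfl (fun i _ => (Measure.map_apply hφ (hs i)).symm)

end Plumb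

section Cond
variable {Ω A B β : Type*} [MeasurableSpace Ω] [MeasurableSpace A] [MeasurableSpace B]
  [MeasurableSpace β]

lemma iid_joint_map (μ : Measure Ω) [IsProbabilityMeasure μ] {n : ℕ} (hn : 0 < n)
    (f : Fin n → Ω → β)
    (hmeas : ∀ i, Measurable (f i)) (hiid : iIndepFun f μ)
    (Q : Measure β) (hlaw : ∀ i, Measure.map (f i) μ = Q) :
    Measure.map (fun x => fun i => f i x) μ = Measure.pi (fun _ => Q) := by
  classical
  haveI : IsProbabilityMeasure Q := by
    rw [← hlaw ⟨0, hn⟩]; exact Measure.isProbabilityMeasure_map (hmeas _).aemeasurable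
  haveI : ∀ i : Fin n, SigmaFinite ((fun _ : Fin n => Q) i) := fun _ => inferInstance
  refine (Measure.pi_eq fun s hs => ?_).symm
  rw [Measure.map_apply
    (show Measurable (fun x => fun i => f i x) from measurable_pi_lambda _ hmeas)
    (MeasurableSet.univ_pi hs)]
  have h1 : (fun x => fun i => f i x) ⁻¹' (Set.pi Set.univ s) = ⋂ i ∈ Finset.univ, f i ⁻¹' s i := by
    ext x; simp [Set.mem_pi]
  rw [h1, hiid.measure_inter_preimage_eq_mul Finset.univ (fun i _ => hs i)]
  refine Finset.prod_congr rfl (fun i _ => ?_)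
  rw [← hlaw i, Measure.map_apply (hmeas i) (hs i)]

lemma cond_indep_map (μ : Measure Ω) [IsProbabilityMeasure μ] {J : Ω → A} {T : Ω → B}
    (hT : Measurable T) (hindep : IndepFun J T μ)
    {V0 : Set B} (hV0 : MeasurableSet V0) (hS : μ (T ⁻¹' V0) ≠ 0) :
    (∀ s : Set A, MeasurableSet s → (μ[|T ⁻¹' V0]) (J ⁻¹' s) = μ (J ⁻¹' s)) ∧
      IndepFun J T (μ[|T ⁻¹' V0]) := by
  have hSm : MeasurableSet (T ⁻¹' V0) := hT hV0
  have hfin : μ (T ⁻¹' V0) ≠ ⊤ := measure_ne_top μ _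
  have hmul := hindep.measure_inter_preimage_eq_mul
  have hcancel : ∀ a : ℝ≥0∞, (μ (T ⁻¹' V0))⁻¹ * (a * μ (T ⁻¹' V0)) = a := by
    intro a
    rw [mul_comm a, ← mul_assoc, ENNReal.inv_mul_cancel hS hfin, one_mul]
  have hmarg : ∀ s : Set A, MeasurableSet s → (μ[|T ⁻¹' V0]) (J ⁻¹' s) = μ (J ⁻¹' s) := by
    intro s hsm
    rw [cond_apply hSm, Set.inter_comm, hmul s V0 hsm hV0, hcancel]
  refine ⟨hmarg, ?_⟩
  rw [indepFun_iff_measure_inter_preimage_eq_mul]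
  intro s t hsm htm
  have h1 : T ⁻¹' V0 ∩ (J ⁻¹' s ∩ T ⁻¹' t) = J ⁻¹' s ∩ T ⁻¹' (V0 ∩ t) := by
    ext x; simp only [Set.mem_inter_iff, Set.mem_preimage, Set.mem_inter_iff]; tauto
  rw [cond_apply hSm, h1, hmul s (V0 ∩ t) hsm (hV0.inter htm), hmarg s hsm,
    cond_apply hSm, Set.inter_comm (T ⁻¹' V0) (T ⁻¹' t), ← Set.preimage_inter,
    Set.inter_comm t V0]
  rw [mul_left_comm]

end Cond

lemma measurable_some' {α : Type u} [MeasurableSpace α] :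
    Measurable (some : α → Option α) := by
  intro s hs
  obtain ⟨t, ht, rfl⟩ := hs
  have : (some : α → Option α) ⁻¹' ((Equiv.optionEquivSumPUnit.{0, u} α) ⁻¹' t)
      = Sum.inl ⁻¹' t := by
    ext a; simp [Equiv.optionEquivSumPUnit]
  rw [this]
  exact measurable_inl ht


/-- Mask-conditional validity of weighted split conformal prediction after
pre-imputation: calibration pairs `(X̂^i, Y^i)` i.i.d. with law `Q`, test triple
`(X^{n+1}, M^{n+1}, Y^{n+1})` independent of them; with `P*_m` the conditional law of
`(mask(X^{n+1},m), Y^{n+1})` given `{M^{n+1}=m}`, `Q*_m` the law of `(mask(X̂^1,m), Y^1)`,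
and `ω_m` a measurable version of `dP*_m/dQ*_m`, the weighted conformal set covers with
conditional probability `≥ 1-α` given `{M^{n+1}=m}`. -/
theorem weighted_conformal_mask_conditional_coverage
    (d n : ℕ) (hd : 1 ≤ d) (hn : 1 ≤ n) (α : ℝ) (hα : α ∈ Set.Ioo (0 : ℝ) 1)
    (s : (Fin d → Option ℝ) × ℝ → ℝ) (hs : Measurable s)
    (Q : Measure ((Fin d → ℝ) × ℝ)) [IsProbabilityMeasure Q]
    {Ω : Type*} [MeasurableSpace Ω] (μ : Measure Ω) [IsProbabilityMeasure μ]
    (XY : Fin n → Ω → (Fin d → ℝ) × ℝ) (hXYmeas : ∀ i, Measurable (XY i))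
    (hXYiid : iIndepFun XY μ)
    (hXYlaw : ∀ i, Measure.map (XY i) μ = Q)
    (Xt : Ω → Fin d → ℝ) (Mt : Ω → Fin d → Bool) (Yt : Ω → ℝ)
    (hXt : Measurable Xt) (hMt : Measurable Mt) (hYt : Measurable Yt)
    (hindep : IndepFun (fun x => fun i => XY i x) (fun x => (Xt x, Mt x, Yt x)) μ)
    (m : Fin d → Bool) (hm : μ {x | Mt x = m} ≠ 0)
    (wm : (Fin d → Option ℝ) × ℝ → ℝ) (hwmeas : Measurable wm) (hw0 : ∀ z, 0 ≤ wm z)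
    (hac : Measure.map (fun x => (maskOp (Xt x) m, Yt x)) (μ[|{x | Mt x = m}]) ≪
           Measure.map (fun p => (maskOp p.1 m, p.2)) Q)
    (hwrnd : ∀ᵐ z ∂(Measure.map (fun p => (maskOp p.1 m, p.2)) Q),
      ENNReal.ofReal (wm z) =
        (Measure.map (fun x => (maskOp (Xt x) m, Yt x)) (μ[|{x | Mt x = m}])).rnDeriv
          (Measure.map (fun p => (maskOp p.1 m, p.2)) Q) z) :
    1 - α ≤
      ((μ[|{x | Mt x = m}]) {x | ((s (maskOp (Xt x) (Mt x), Yt x) : ℝ) : EReal) ≤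
        wQuantile (1 - α)
          (fun i : Option (Fin n) =>
            i.elim
              (wm (maskOp (Xt x) (Mt x), Yt x) /
                ((∑ j : Fin n, wm (maskOp (XY j x).1 m, (XY j x).2)) +
                  wm (maskOp (Xt x) (Mt x), Yt x)))
              (fun j => wm (maskOp (XY j x).1 m, (XY j x).2) /
                ((∑ j' : Fin n, wm (maskOp (XY j' x).1 m, (XY j' x).2)) +
                  wm (maskOp (Xt x) (Mt x), Yt x))))
          (fun i : Option (Fin n) =>
            i.elim (⊤ : EReal)
              (fun j => ((s (maskOp (XY j x).1 m, (XY j x).2) : ℝ) : EReal)))}).toReal := by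
  classical
  obtain ⟨hα0, hα1⟩ := hα
  have hβ0 : (0:ℝ) < 1 - α := by linarith
  have hβ1 : (1:ℝ) - α ≤ 1 := by linarith
  -- basic measurability
  have hsome : Measurable (some : ℝ → Option ℝ) := measurable_some'
  have hmaskm : Measurable (fun x : Fin d → ℝ => maskOp x m) := by
    apply measurable_pi_lambda
    intro j
    unfold maskOp
    by_cases hj : m j
    · simp only [hj, if_true]; exact measurable_const
    · simp only [hj, if_false]
      exact hsome.comp (measurable_pi_apply j)
  have hφ : Measurable (fun p : (Fin d → ℝ) × ℝ => (maskOp p.1 m, p.2)) :=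
    (hmaskm.comp measurable_fst).prodMk measurable_snd
  have hψ : Measurable (fun x : Ω => (maskOp (Xt x) m, Yt x)) :=
    (hmaskm.comp hXt).prodMk hYt
  have hSmeas : MeasurableSet {x | Mt x = m} := hMt (measurableSet_singleton m)
  haveI hμcP : IsProbabilityMeasure (μ[|{x | Mt x = m}]) := cond_isProbabilityMeasure hm
  set μc : Measure Ω := μ[|{x | Mt x = m}] with hμcdef
  set ν : Measure ((Fin d → Option ℝ) × ℝ) :=
    Measure.map (fun p => (maskOp p.1 m, p.2)) Q with hν
  haveI : IsProbabilityMeasure ν := Measure.isProbabilityMeasure_map hφ.aemeasurable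
  set P : Measure ((Fin d → Option ℝ) × ℝ) :=
    Measure.map (fun x => (maskOp (Xt x) m, Yt x)) μc with hP
  haveI : IsProbabilityMeasure P := Measure.isProbabilityMeasure_map hψ.aemeasurable
  -- conditioning: independence and marginals
  have hTmeas : Measurable (fun x : Ω => (Xt x, Mt x, Yt x)) := hXt.prodMk (hMt.prodMk hYt)
  have hV0 : MeasurableSet ((fun p : (Fin d → ℝ) × (Fin d → Bool) × ℝ => p.2.1) ⁻¹' {m}) :=
    (measurable_fst.comp measurable_snd) (measurableSet_singleton m)
  have hTV0 : (fun x : Ω => (Xt x, Mt x, Yt x)) ⁻¹'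
      ((fun p : (Fin d → ℝ) × (Fin d → Bool) × ℝ => p.2.1) ⁻¹' {m}) = {x | Mt x = m} := rfl
  obtain ⟨hmarg, hciFun⟩ := cond_indep_map μ hTmeas hindep hV0 (by rw [hTV0]; exact hm)
  rw [hTV0] at hmarg hciFun
  -- joint law of calibration data under the conditional measure
  have hJmeas : Measurable (fun x : Ω => fun i => XY i x) := measurable_pi_lambda _ hXYmeas
  have hmapJc : Measure.map (fun x : Ω => fun i => XY i x) μc = Measure.pi (fun _ : Fin n => Q) := by
    rw [← iid_joint_map μ hn XY hXYmeas hXYiid Q hXYlaw]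
    ext u hu
    rw [Measure.map_apply hJmeas hu, Measure.map_apply hJmeas hu, hμcdef, hmarg _ hu]
  set Jφ : Ω → Fin n → (Fin d → Option ℝ) × ℝ :=
    fun x => fun i => (maskOp (XY i x).1 m, (XY i x).2) with hJφdef
  have hpostφ : Measurable (fun f : Fin n → (Fin d → ℝ) × ℝ =>
      fun i => (maskOp (f i).1 m, (f i).2)) :=
    measurable_pi_lambda _ (fun i => hφ.comp (measurable_pi_apply i))
  have hJφmeas : Measurable Jφ := measurable_pi_lambda _ (fun i => hφ.comp (hXYmeas i))
  have hmapJφ : Measure.map Jφ μc = Measure.pi (fun _ : Fin n => ν) := by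
    have hfac : Jφ = (fun f : Fin n → (Fin d → ℝ) × ℝ => fun i => (maskOp (f i).1 m, (f i).2))
        ∘ (fun x => fun i => XY i x) := rfl
    rw [hfac, ← Measure.map_map hpostφ hJmeas, hmapJc, hν]
    exact pi_map_comp Q _ hφ
  -- density of P with respect to ν
  set g : (Fin d → Option ℝ) × ℝ → ℝ≥0∞ := fun z => ENNReal.ofReal (wm z) with hg
  have hgmeas : Measurable g := ENNReal.measurable_ofReal.comp hwmeas
  have hPdens : P = ν.withDensity g := by
    rw [show ν.withDensity g = ν.withDensity (P.rnDeriv ν) from withDensity_congr_ae hwrnd]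
    exact (Measure.withDensity_rnDeriv_eq P ν hac).symm
  -- independence of Jφ and the masked test point under μc
  have hiψ : IndepFun Jφ (fun x : Ω => (maskOp (Xt x) m, Yt x)) μc := by
    have := hciFun.comp
      (φ := fun f : Fin n → (Fin d → ℝ) × ℝ => fun i => (maskOp (f i).1 m, (f i).2))
      (ψ := fun p : (Fin d → ℝ) × (Fin d → Bool) × ℝ => (maskOp p.1 m, p.2.2))
      hpostφ ((hmaskm.comp measurable_fst).prodMk (measurable_snd.comp measurable_snd))
    exact this
  -- joint map H and its law
  set H : Ω → (Fin n → ((Fin d → Option ℝ) × ℝ)) × ((Fin d → Option ℝ) × ℝ) :=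
    fun x => (Jφ x, (maskOp (Xt x) m, Yt x)) with hHdef
  have hHmeas : Measurable H := hJφmeas.prodMk hψ
  have hmapH : Measure.map H μc = (Measure.pi (fun _ : Fin n => ν)).prod P := by
    rw [hHdef]
    rw [(indepFun_iff_map_prod_eq_prod_map_map hJφmeas.aemeasurable hψ.aemeasurable).1 hiψ,
      hmapJφ, hP]
  -- glue to the Option-indexed product space
  set glue : (Fin n → ((Fin d → Option ℝ) × ℝ)) × ((Fin d → Option ℝ) × ℝ)
      → (Option (Fin n) → (Fin d → Option ℝ) × ℝ) :=
    fun p => fun o => o.elim p.2 p.1 with hgluedef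
  have hgluemp := map_glue_pi ν n
  set PiO : Measure (Option (Fin n) → (Fin d → Option ℝ) × ℝ) :=
    Measure.pi (fun _ => ν) with hPiOdef
  set G : Ω → Option (Fin n) → (Fin d → Option ℝ) × ℝ :=
    fun x => fun o => o.elim (maskOp (Xt x) m, Yt x)
      (fun i => (maskOp (XY i x).1 m, (XY i x).2)) with hGdef
  have hGmeas : Measurable G := by
    apply measurable_pi_lambda
    rintro (_ | i)
    · exact hψ
    · exact hφ.comp (hXYmeas i)
  have hGfac : G = glue ∘ H := rfl
  set gne : (Option (Fin n) → (Fin d → Option ℝ) × ℝ) → ℝ≥0∞ := fun z => g (z none) with hgnedef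
  have hgnemeas : Measurable gne := hgmeas.comp (measurable_pi_apply none)
  have hmapG : Measure.map G μc = PiO.withDensity gne := by
    rw [hGfac, ← Measure.map_map hgluemp.measurable hHmeas, hmapH, hPdens,
      prod_withDensity _ _ g hgmeas]
    rw [show (fun p : (Fin n → ((Fin d → Option ℝ) × ℝ)) × ((Fin d → Option ℝ) × ℝ) => g p.2)
        = gne ∘ glue from rfl]
    rw [map_withDensity_comp _ glue hgluemp.measurable gne hgnemeas, hgluemp.map_eq]
  -- the conformal quantile data on the product space
  set Dz : (Option (Fin n) → (Fin d → Option ℝ) × ℝ) → ℝ :=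
    fun z => (∑ j : Fin n, wm (z (some j))) + wm (z none) with hDzdef
  have hDsym : ∀ z, Dz z = ∑ o : Option (Fin n), wm (z o) := by
    intro z
    rw [hDzdef]
    simp only
    rw [Fintype.sum_option]
    ring
  set Wz : (Option (Fin n) → (Fin d → Option ℝ) × ℝ) → Option (Fin n) → ℝ :=
    fun z o => wm (z o) / Dz z with hWzdef
  have hDnn : ∀ z, 0 ≤ Dz z := by
    intro z; rw [hDsym]; exact Finset.sum_nonneg fun _ _ => hw0 _
  have hWnn : ∀ z o, 0 ≤ Wz z o := fun z o => div_nonneg (hw0 _) (hDnn z)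
  set Vhat : (Option (Fin n) → (Fin d → Option ℝ) × ℝ) → Option (Fin n) → EReal :=
    fun z => fun i => i.elim (⊤ : EReal) (fun j => ((s (z (some j)) : ℝ) : EReal)) with hVhatdef
  set Vfull : (Option (Fin n) → (Fin d → Option ℝ) × ℝ) → Option (Fin n) → EReal :=
    fun z o => ((s (z o) : ℝ) : EReal) with hVfulldef
  set Qhat : (Option (Fin n) → (Fin d → Option ℝ) × ℝ) → EReal :=
    fun z => wQuantile (1 - α) (Wz z) (Vhat z) with hQhatdef
  set Qfull : (Option (Fin n) → (Fin d → Option ℝ) × ℝ) → EReal :=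
    fun z => wQuantile (1 - α) (Wz z) (Vfull z) with hQfulldef
  have hWmeas : ∀ o, Measurable (fun z => Wz z o) := by
    intro o
    apply Measurable.div (hwmeas.comp (measurable_pi_apply o))
    rw [hDzdef]
    apply Measurable.add
    · exact Finset.measurable_sum _ (fun j _ => hwmeas.comp (measurable_pi_apply (some j)))
    · exact hwmeas.comp (measurable_pi_apply none)
  have hVhatmeas : ∀ o, Measurable (fun z => Vhat z o) := by
    rintro (_ | j)
    · exact measurable_const
    · exact measurable_coe_real_ereal.comp (hs.comp (measurable_pi_apply (some j)))
  have hVfullmeas : ∀ o, Measurable (fun z => Vfull z o) :=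
    fun o => measurable_coe_real_ereal.comp (hs.comp (measurable_pi_apply o))
  have hQhatmeas : Measurable Qhat :=
    measurable_wQuantile _ Wz Vhat hWmeas (fun z o => hWnn z o) hVhatmeas
  have hQfullmeas : Measurable Qfull :=
    measurable_wQuantile _ Wz Vfull hWmeas (fun z o => hWnn z o) hVfullmeas
  set E : Set (Option (Fin n) → (Fin d → Option ℝ) × ℝ) :=
    {z | ((s (z none) : ℝ) : EReal) ≤ Qhat z} with hEdef
  have hEmeas : MeasurableSet E :=
    measurableSet_le (measurable_coe_real_ereal.comp (hs.comp (measurable_pi_apply none)))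
      hQhatmeas
  -- identify the coverage event with G ⁻¹' E on {Mt = m}
  have hEv : {x | ((s (maskOp (Xt x) (Mt x), Yt x) : ℝ) : EReal) ≤
        wQuantile (1 - α)
          (fun i : Option (Fin n) =>
            i.elim
              (wm (maskOp (Xt x) (Mt x), Yt x) /
                ((∑ j : Fin n, wm (maskOp (XY j x).1 m, (XY j x).2)) +
                  wm (maskOp (Xt x) (Mt x), Yt x)))
              (fun j => wm (maskOp (XY j x).1 m, (XY j x).2) /
                ((∑ j' : Fin n, wm (maskOp (XY j' x).1 m, (XY j' x).2)) +
                  wm (maskOp (Xt x) (Mt x), Yt x))))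
          (fun i : Option (Fin n) =>
            i.elim (⊤ : EReal)
              (fun j => ((s (maskOp (XY j x).1 m, (XY j x).2) : ℝ) : EReal)))}
        ∩ {x | Mt x = m} = (G ⁻¹' E) ∩ {x | Mt x = m} := by
    ext x
    simp only [Set.mem_inter_iff, Set.mem_setOf_eq, Set.mem_preimage]
    refine and_congr_left (fun h2 => ?_)
    rw [h2]
    have hWx : (fun i : Option (Fin n) =>
        i.elim
          (wm (maskOp (Xt x) m, Yt x) /
            ((∑ j : Fin n, wm (maskOp (XY j x).1 m, (XY j x).2)) +
              wm (maskOp (Xt x) m, Yt x)))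
          (fun j => wm (maskOp (XY j x).1 m, (XY j x).2) /
            ((∑ j' : Fin n, wm (maskOp (XY j' x).1 m, (XY j' x).2)) +
              wm (maskOp (Xt x) m, Yt x)))) = Wz (G x) := by
      funext o
      cases o <;> rfl
    have hVx : (fun i : Option (Fin n) =>
        i.elim (⊤ : EReal)
          (fun j => ((s (maskOp (XY j x).1 m, (XY j x).2) : ℝ) : EReal))) = Vhat (G x) := rfl
    rw [hWx, hVx]
    exact Iff.rfl
  -- reduce the goal to a statement about Λ := PiO.withDensity gne
  set Λ : Measure (Option (Fin n) → (Fin d → Option ℝ) × ℝ) := PiO.withDensity gne with hΛdef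
  haveI : IsProbabilityMeasure Λ := by
    rw [← hmapG]; exact Measure.isProbabilityMeasure_map hGmeas.aemeasurable
  have hcompl : μc {x | Mt x = m}ᶜ = 0 := by
    rw [hμcdef, cond_apply hSmeas]
    rw [Set.inter_compl_self]
    simp
  have hgoalmeasure : μc {x | ((s (maskOp (Xt x) (Mt x), Yt x) : ℝ) : EReal) ≤
        wQuantile (1 - α)
          (fun i : Option (Fin n) =>
            i.elim
              (wm (maskOp (Xt x) (Mt x), Yt x) /
                ((∑ j : Fin n, wm (maskOp (XY j x).1 m, (XY j x).2)) +
                  wm (maskOp (Xt x) (Mt x), Yt x)))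
              (fun j => wm (maskOp (XY j x).1 m, (XY j x).2) /
                ((∑ j' : Fin n, wm (maskOp (XY j' x).1 m, (XY j' x).2)) +
                  wm (maskOp (Xt x) (Mt x), Yt x))))
          (fun i : Option (Fin n) =>
            i.elim (⊤ : EReal)
              (fun j => ((s (maskOp (XY j x).1 m, (XY j x).2) : ℝ) : EReal)))} = Λ E := by
    rw [← measure_inter_conull hcompl, hEv, measure_inter_conull hcompl,
      ← Measure.map_apply hGmeas hEmeas, hmapG]
  -- miscoverage bound
  set ho : Option (Fin n) → (Option (Fin n) → (Fin d → Option ℝ) × ℝ) → ℝ≥0∞ :=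
    fun o z => if Qfull z < ((s (z o) : ℝ) : EReal) then g (z o) else 0 with hhodef
  have homeas : ∀ o, Measurable (ho o) := by
    intro o
    exact Measurable.ite
      (measurableSet_lt hQfullmeas
        (measurable_coe_real_ereal.comp (hs.comp (measurable_pi_apply o))))
      (hgmeas.comp (measurable_pi_apply o)) measurable_const
  have hQle : ∀ z, Qfull z ≤ Qhat z := by
    intro z
    apply wQuantile_mono (hWnn z)
    rintro (_ | j)
    · exact le_top
    · exact le_refl _
  have step1 : Λ Eᶜ ≤ ∫⁻ z, ho none z ∂PiO := by
    rw [hΛdef, withDensity_apply _ hEmeas.compl, ← lintegral_indicator hEmeas.compl]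
    apply lintegral_mono
    intro z
    by_cases hz : z ∈ Eᶜ
    · rw [Set.indicator_of_mem hz]
      have hlt : Qhat z < ((s (z none) : ℝ) : EReal) := by
        have h3 := hz
        simp only [hEdef, Set.mem_compl_iff, Set.mem_setOf_eq, not_le] at h3
        exact h3
      rw [hhodef]
      simp only
      rw [if_pos ((hQle z).trans_lt hlt)]
    · rw [Set.indicator_of_notMem hz]; exact zero_le
  have step2 : ∀ o : Option (Fin n), ∫⁻ z, ho none z ∂PiO = ∫⁻ z, ho o z ∂PiO := by
    intro o
    have hmp := pi_map_perm ν (Equiv.swap none o)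
    rw [hPiOdef, ← hmp.lintegral_comp (homeas none)]
    apply lintegral_congr
    intro z
    have hz1 : (fun i => z ((Equiv.swap none o) i)) none = z o := by
      show z ((Equiv.swap none o) none) = z o
      rw [Equiv.swap_apply_left]
    have hDeq : Dz (fun i => z ((Equiv.swap none o) i)) = Dz z := by
      rw [hDsym (fun i => z ((Equiv.swap none o) i)), hDsym z]
      exact Fintype.sum_equiv (Equiv.swap none o) _ _ (fun o' => rfl)
    have hWeq : Wz (fun i => z ((Equiv.swap none o) i))
        = fun o' => (fun o'' => wm (z o'') / Dz z) ((Equiv.swap none o) o') := by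
      funext o'
      rw [hWzdef]
      simp only
      rw [hDeq]
    have hVeq : Vfull (fun i => z ((Equiv.swap none o) i))
        = fun o' => Vfull z ((Equiv.swap none o) o') := rfl
    have hQf : Qfull (fun i => z ((Equiv.swap none o) i)) = Qfull z := by
      rw [hQfulldef]
      simp only
      rw [hWeq, hVeq]
      rw [wQuantile_comp_equiv (1 - α) (fun o'' => wm (z o'') / Dz z) (Vfull z)
        (Equiv.swap none o)]
    rw [hhodef]
    simp only [hz1, hQf]
  -- expected total weight
  have hintg : ∀ o : Option (Fin n), ∫⁻ z, g (z o) ∂PiO = 1 := by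
    intro o
    have hmp2 : MeasurePreserving (fun z : Option (Fin n) → (Fin d → Option ℝ) × ℝ => z o)
        PiO ν := ⟨measurable_pi_apply o, by rw [hPiOdef]; exact map_eval_pi' ν o⟩
    rw [show ∫⁻ z, g (z o) ∂PiO = ∫⁻ y, g y ∂ν from hmp2.lintegral_comp hgmeas]
    rw [lintegral_congr_ae hwrnd]
    rw [← setLIntegral_univ, ← withDensity_apply _ MeasurableSet.univ,
      Measure.withDensity_rnDeriv_eq P ν hac]
    exact measure_univ
  have hptwise : ∀ z, ∑ o : Option (Fin n), ho o z
      ≤ ENNReal.ofReal α * ENNReal.ofReal (Dz z) := by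
    intro z
    have h1 : ∑ o : Option (Fin n), ho o z
        = ∑ o ∈ Finset.univ.filter (fun o => Qfull z < ((s (z o) : ℝ) : EReal)), g (z o) := by
      rw [Finset.sum_filter]
    have h2 : ∑ o ∈ Finset.univ.filter (fun o => Qfull z < ((s (z o) : ℝ) : EReal)), g (z o)
        = ENNReal.ofReal (∑ o ∈ Finset.univ.filter
            (fun o => Qfull z < ((s (z o) : ℝ) : EReal)), wm (z o)) := by
      rw [ENNReal.ofReal_sum_of_nonneg (fun o _ => hw0 _)]
    have h3 := mass_above_wQuantile' (β := 1 - α) hβ0 hβ1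
      (fun o : Option (Fin n) => wm (z o)) (fun o => hw0 _) (fun o => s (z o))
    have hq : wQuantile (1 - α) (fun j : Option (Fin n) => wm (z j) / ∑ k, wm (z k))
        (fun j => ((s (z j) : ℝ) : EReal)) = Qfull z := by
      rw [hQfulldef]
      simp only
      congr 1
      · funext j
        rw [hWzdef]
        simp only
        rw [hDsym]
    rw [hq] at h3
    have h4 : (1 - (1 - α)) * ∑ k : Option (Fin n), wm (z k) = α * Dz z := by
      rw [hDsym]; ring
    rw [h4] at h3
    rw [h1, h2]
    calc ENNReal.ofReal (∑ o ∈ Finset.univ.filter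
          (fun o => Qfull z < ((s (z o) : ℝ) : EReal)), wm (z o))
        ≤ ENNReal.ofReal (α * Dz z) := ENNReal.ofReal_le_ofReal h3
      _ = ENNReal.ofReal α * ENNReal.ofReal (Dz z) := ENNReal.ofReal_mul hα0.le
  have hDint : ∫⁻ z, ENNReal.ofReal (Dz z) ∂PiO = (n + 1 : ℝ≥0∞) := by
    have h1 : ∀ z, ENNReal.ofReal (Dz z) = ∑ o : Option (Fin n), g (z o) := by
      intro z
      rw [hDsym, ENNReal.ofReal_sum_of_nonneg (fun o _ => hw0 _)]
    simp_rw [h1]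
    rw [lintegral_finset_sum Finset.univ (f := fun (o : Option (Fin n))
        (z : Option (Fin n) → (Fin d → Option ℝ) × ℝ) => g (z o))
      (fun o _ => hgmeas.comp (measurable_pi_apply o))]
    simp only [hintg]
    simp [Finset.card_univ]
  have step3 : ∫⁻ z, ho none z ∂PiO ≤ ENNReal.ofReal α := by
    have hcardsum : ∑ o : Option (Fin n), ∫⁻ z, ho o z ∂PiO
        = (n + 1 : ℝ≥0∞) * ∫⁻ z, ho none z ∂PiO := by
      rw [show ∑ o : Option (Fin n), ∫⁻ z, ho o z ∂PiO
          = ∑ _o : Option (Fin n), ∫⁻ z, ho none z ∂PiO from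
        Finset.sum_congr rfl (fun o _ => (step2 o).symm)]
      rw [Finset.sum_const, Finset.card_univ, nsmul_eq_mul]
      norm_num
    have hup : ∑ o : Option (Fin n), ∫⁻ z, ho o z ∂PiO
        ≤ (n + 1 : ℝ≥0∞) * ENNReal.ofReal α := by
      rw [← lintegral_finset_sum _ (fun o _ => homeas o)]
      calc ∫⁻ z, ∑ o : Option (Fin n), ho o z ∂PiO
          ≤ ∫⁻ z, ENNReal.ofReal α * ENNReal.ofReal (Dz z) ∂PiO := lintegral_mono hptwise
        _ = ENNReal.ofReal α * ∫⁻ z, ENNReal.ofReal (Dz z) ∂PiO := by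
            rw [lintegral_const_mul _ (by
              apply ENNReal.measurable_ofReal.comp
              rw [hDzdef]
              apply Measurable.add
              · exact Finset.measurable_sum _
                  (fun j _ => hwmeas.comp (measurable_pi_apply (some j)))
              · exact hwmeas.comp (measurable_pi_apply none))]
        _ = (n + 1 : ℝ≥0∞) * ENNReal.ofReal α := by rw [hDint, mul_comm]
    rw [hcardsum] at hup
    have hne0 : (n + 1 : ℝ≥0∞) ≠ 0 :=
      (lt_of_lt_of_le one_pos le_add_self).ne'
    have hnetop : (n + 1 : ℝ≥0∞) ≠ ⊤ := by
      simp [ENNReal.add_ne_top]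
    exact (ENNReal.mul_le_mul_iff_right hne0 hnetop).1 hup
  have hmis : Λ Eᶜ ≤ ENNReal.ofReal α := step1.trans step3
  -- conclude
  rw [hgoalmeasure]
  have hfinal : Λ E = 1 - Λ Eᶜ := by
    have h5 := measure_compl hEmeas (measure_ne_top Λ E)
    rw [measure_univ] at h5
    rw [h5, ENNReal.sub_sub_cancel ENNReal.one_ne_top prob_le_one]
  rw [hfinal]
  have hmis1 : Λ Eᶜ ≤ 1 := hmis.trans (ENNReal.ofReal_le_one.2 hα1.le)
  have h6 : (1 - Λ Eᶜ).toReal = 1 - (Λ Eᶜ).toReal := by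
    rw [ENNReal.toReal_sub_of_le hmis1 ENNReal.one_ne_top, ENNReal.toReal_one]
  rw [h6]
  have h7 : (Λ Eᶜ).toReal ≤ α := by
    have h8 := ENNReal.toReal_mono ENNReal.ofReal_ne_top hmis
    rwa [ENNReal.toReal_ofReal hα0.le] at h8
  linarith
end

section
/- Let (Z, 𝒵) be a measurable space, let Q and P be probability measures on Z with P absolutely continuous with respect to Q, and let ω : Z → [0,∞) be a measurable version of the Radon–Nikodym density dP/dQ. On a common probability space, let Z^1, …, Z^n be i.i.d. with law Q and let Z^{n+1} have law P, with Z^1, …, Z^{n+1} mutually independent. Let V : Z → ℝ be measurable and α ∈ (0,1). Define the weights p_i := ω(Z^i) / (Σ_{j=1}^n ω(Z^j) + ω(Z^{n+1})) for i = 1, …, n+1 (with the convention that the weighted quantile below is +∞ when the denominator is 0). Then P( V(Z^{n+1}) ≤ Quantile_{1−α}( Σ_{i=1}^n p_i δ_{V(Z^i)} + p_{n+1} δ_{+∞} ) ) ≥ 1 − α. -/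
open MeasureTheory ProbabilityTheory
open scoped ENNReal

universe u

section WCCAux
open Finset
variable {Z : Type*} [MeasurableSpace Z]


lemma wQuantile_lt_coe_iff {ι : Type*} [Fintype ι] {β : ℝ} (hβ : 0 < β)
    {p : ι → ℝ} (hp : ∀ i, 0 ≤ p i) (sc : ι → EReal) (a : ℝ) :
    wQuantile β p sc < (a : EReal) ↔
      β ≤ ∑ i ∈ Finset.univ.filter (fun i => sc i < (a : EReal)), p i := by
  rw [wQuantile, sInf_lt_iff]
  constructor
  · rintro ⟨b, ⟨r, rfl, hr⟩, hba⟩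
    refine hr.trans (Finset.sum_le_sum_of_subset_of_nonneg ?_ fun i _ _ => hp i)
    intro i hi
    simp only [Finset.mem_filter, Finset.mem_univ, true_and] at hi ⊢
    exact lt_of_le_of_lt hi hba
  · intro h
    set G := Finset.univ.filter (fun i => sc i < (a : EReal)) with hG
    have hGne : G.Nonempty := by
      rcases G.eq_empty_or_nonempty with he | hne
      · rw [he, Finset.sum_empty] at h; linarith
      · exact hne
    classical
    set g : ι → ℝ := fun i => if sc i = ⊥ then a - 1 else (sc i).toReal with hgdef
    have hg_lt : ∀ i ∈ G, g i < a := by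
      intro i hi
      simp only [hG, Finset.mem_filter, Finset.mem_univ, true_and] at hi
      by_cases hb : sc i = ⊥
      · simp [hgdef, hb]
      · have hnt : sc i ≠ ⊤ := fun ht => by simp [ht] at hi
        have : sc i = ((sc i).toReal : EReal) := (EReal.coe_toReal hnt hb).symm
        rw [this] at hi
        simpa [hgdef, hb] using (EReal.coe_lt_coe_iff.mp hi)
    have hg_le : ∀ i ∈ G, sc i ≤ ((g i : ℝ) : EReal) := by
      intro i hi
      by_cases hb : sc i = ⊥
      · simp [hb]
      · simp only [hG, Finset.mem_filter, Finset.mem_univ, true_and] at hi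
        have hnt : sc i ≠ ⊤ := fun ht => by simp [ht] at hi
        have : sc i = ((sc i).toReal : EReal) := (EReal.coe_toReal hnt hb).symm
        rw [this]; simp [hgdef, hb]
    set r : ℝ := (G.image g).max' (hGne.image g) with hrdef
    have hrA : r < a := by
      obtain ⟨i, hi, hir⟩ := Finset.mem_image.mp ((G.image g).max'_mem (hGne.image g))
      rw [hrdef] at *
      rw [← hir]; exact hg_lt i hi
    refine ⟨(r : EReal), ⟨r, rfl, ?_⟩, EReal.coe_lt_coe_iff.mpr hrA⟩
    refine h.trans (Finset.sum_le_sum_of_subset_of_nonneg ?_ fun i _ _ => hp i)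
    intro i hi
    simp only [Finset.mem_filter, Finset.mem_univ, true_and]
    refine (hg_le i hi).trans ?_
    exact_mod_cast EReal.coe_le_coe_iff.mpr (Finset.le_max' _ _ (Finset.mem_image_of_mem g hi))

lemma key_det {ι : Type*} [Fintype ι] {α : ℝ} (hα0 : 0 < α)
    (u : ι → ℝ) (hu : ∀ i, 0 ≤ u i) (v : ι → ℝ) :
    ∑ i ∈ Finset.univ.filter
        (fun i => 1 - α ≤ ∑ k ∈ Finset.univ.filter (fun k => v k < v i), u k / ∑ j, u j), u i
      ≤ α * ∑ j, u j := by
  classical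
  set S := ∑ j, u j with hS
  have hS0 : 0 ≤ S := Finset.sum_nonneg fun j _ => hu j
  set B := Finset.univ.filter
      (fun i => 1 - α ≤ ∑ k ∈ Finset.univ.filter (fun k => v k < v i), u k / S) with hB
  rcases B.eq_empty_or_nonempty with he | hne
  · rw [he, Finset.sum_empty]; positivity
  rcases eq_or_lt_of_le hS0 with hSz | hSpos
  · -- S = 0 : all u i = 0
    have hzero : ∀ i ∈ Finset.univ, u i = 0 := by
      intro i _
      exact (Finset.sum_eq_zero_iff_of_nonneg (fun j _ => hu j)).mp hSz.symm i (Finset.mem_univ i)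
    calc ∑ i ∈ B, u i = 0 := Finset.sum_eq_zero fun i hi => hzero i (Finset.mem_univ i)
      _ ≤ α * S := by positivity
  obtain ⟨i0, hi0B, hi0min⟩ := Finset.exists_min_image B v hne
  have hcond : 1 - α ≤ ∑ k ∈ Finset.univ.filter (fun k => v k < v i0), u k / S := by
    simpa [hB] using (Finset.mem_filter.mp hi0B).2
  have hlow : (1 - α) * S ≤ ∑ k ∈ Finset.univ.filter (fun k => v k < v i0), u k := by
    rw [← Finset.sum_div] at hcond
    calc (1 - α) * S ≤ (∑ k ∈ Finset.univ.filter (fun k => v k < v i0), u k) / S * S := by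
          exact mul_le_mul_of_nonneg_right hcond hS0
      _ = _ := div_mul_cancel₀ _ (ne_of_gt hSpos)
  have hsub : B ⊆ Finset.univ.filter (fun i => ¬ v i < v i0) := by
    intro i hi
    simp only [Finset.mem_filter, Finset.mem_univ, true_and, not_lt]
    exact hi0min i hi
  calc ∑ i ∈ B, u i ≤ ∑ i ∈ Finset.univ.filter (fun i => ¬ v i < v i0), u i :=
        Finset.sum_le_sum_of_subset_of_nonneg hsub fun i _ _ => hu i
    _ = S - ∑ i ∈ Finset.univ.filter (fun i => v i < v i0), u i := by
        rw [hS, ← Finset.sum_filter_add_sum_filter_not Finset.univ (fun i => v i < v i0) u]; ring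
    _ ≤ S - (1 - α) * S := by linarith
    _ = α * S := by ring



/-- The joint law of independent random variables is the product of the marginals. -/
lemma map_pi_of_iIndep {Ω : Type*} [MeasurableSpace Ω] {μ : Measure Ω} [IsProbabilityMeasure μ]
    {n : ℕ} {Zi : Fin n → Ω → Z} (hZmeas : ∀ i, Measurable (Zi i))
    (hindep : iIndepFun Zi μ) :
    Measure.map (fun x i => Zi i x) μ = Measure.pi (fun i => Measure.map (Zi i) μ) := by
  haveI : ∀ i, IsProbabilityMeasure (Measure.map (Zi i) μ) :=
    fun i => Measure.isProbabilityMeasure_map (hZmeas i).aemeasurable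
  refine (Measure.pi_eq fun s hs => ?_).symm
  rw [Measure.map_apply (measurable_pi_lambda _ fun i => hZmeas i) (MeasurableSet.univ_pi hs)]
  have hpre : (fun x i => Zi i x) ⁻¹' (Set.univ.pi s) = ⋂ i ∈ Finset.univ, Zi i ⁻¹' s i := by
    ext x; simp [Set.mem_pi]
  rw [hpre, hindep.measure_inter_preimage_eq_mul Finset.univ (fun i _ => hs i)]
  exact Finset.prod_congr rfl fun i _ =>
    (Measure.map_apply (hZmeas i) (hs i)).symm

/-- Replacing the last factor of a product measure by a `withDensity` amounts to
multiplying by the density at the last coordinate. -/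
lemma pi_last_withDensity {n : ℕ} (Q : Measure Z) [IsProbabilityMeasure Q]
    {g : Z → ℝ≥0∞} (hg : Measurable g)
    (ν : Fin (n + 1) → Measure Z) [hprob : ∀ i, IsProbabilityMeasure (ν i)]
    (hν : ∀ j : Fin n, ν j.castSucc = Q) (hlast : ν (Fin.last n) = Q.withDensity g) :
    Measure.pi ν =
      (Measure.pi fun _ : Fin (n + 1) => Q).withDensity (fun z => g (z (Fin.last n))) := by
  have hQn : (Measure.pi fun j : Fin n => ν ((Fin.last n).succAbove j)) =
      Measure.pi (fun _ : Fin n => Q) := by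
    congr 1; funext j; rw [Fin.succAbove_last, hν]
  set e := MeasurableEquiv.piFinSuccAbove (fun _ : Fin (n + 1) => Z) (Fin.last n) with he
  have hmp1 : MeasurePreserving e (Measure.pi ν)
      ((ν (Fin.last n)).prod (Measure.pi fun j => ν ((Fin.last n).succAbove j))) :=
    measurePreserving_piFinSuccAbove ν (Fin.last n)
  have hmp2 : MeasurePreserving e (Measure.pi fun _ : Fin (n + 1) => Q)
      (Q.prod (Measure.pi fun _ : Fin n => Q)) :=
    measurePreserving_piFinSuccAbove (fun _ : Fin (n + 1) => Q) (Fin.last n)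
  ext s hs
  set F : (Fin (n + 1) → Z) → ℝ≥0∞ := s.indicator 1 with hFdef
  have hF : Measurable F := measurable_const.indicator hs
  set G : Z × (Fin n → Z) → ℝ≥0∞ := fun p => F (e.symm p) with hGdef
  have hG : Measurable G := hF.comp e.symm.measurable
  have hGright : ∀ a, Measurable fun b => G (a, b) :=
    fun a => hG.comp measurable_prodMk_left
  have hinner : Measurable fun a => ∫⁻ b, G (a, b) ∂(Measure.pi fun _ : Fin n => Q) :=
    Measurable.lintegral_prod_right (f := fun a b => G (a, b)) hG
  have hgG : Measurable fun p : Z × (Fin n → Z) => g p.1 * G p :=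
    (hg.comp measurable_fst).mul hG
  calc Measure.pi ν s = ∫⁻ z, F z ∂(Measure.pi ν) := by
        rw [hFdef, lintegral_indicator_one hs]
    _ = ∫⁻ p, G p
          ∂((ν (Fin.last n)).prod (Measure.pi fun j => ν ((Fin.last n).succAbove j))) := by
        rw [← hmp1.lintegral_comp hG]
        congr 1; funext z; rw [hGdef]; simp
    _ = ∫⁻ a, ∫⁻ b, G (a, b) ∂(Measure.pi fun _ : Fin n => Q) ∂(Q.withDensity g) := by
        rw [hQn, hlast, lintegral_prod _ hG.aemeasurable]
    _ = ∫⁻ a, g a * ∫⁻ b, G (a, b) ∂(Measure.pi fun _ : Fin n => Q) ∂Q := by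
        rw [lintegral_withDensity_eq_lintegral_mul Q hg hinner]
        rfl
    _ = ∫⁻ p : Z × (Fin n → Z), g p.1 * G p
          ∂(Q.prod (Measure.pi fun _ : Fin n => Q)) := by
        rw [lintegral_prod _ hgG.aemeasurable]
        simp_rw [lintegral_const_mul _ (hGright _)]
    _ = ∫⁻ z, g (z (Fin.last n)) * F z ∂(Measure.pi fun _ : Fin (n + 1) => Q) := by
        rw [← hmp2.lintegral_comp hgG]
        congr 1; funext z
        have h1 : (e z).1 = z (Fin.last n) := rfl
        have h2 : G (e z) = F z := by rw [hGdef]; simp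
        rw [h1, h2]
    _ = _ := by
        rw [withDensity_apply _ hs, ← lintegral_indicator hs]
        congr 1; funext z
        rw [hFdef]
        by_cases hz : z ∈ s <;> simp [Set.indicator_apply, hz]

def condSet {Z : Type*} (w V : Z → ℝ) (α : ℝ) {n : ℕ} (i : Fin (n + 1)) :
    Set (Fin (n + 1) → Z) :=
  {z | 1 - α ≤ ∑ k ∈ Finset.univ.filter (fun k => V (z k) < V (z i)), w (z k) / ∑ j, w (z j)}

lemma condSet_eq {Z : Type*} (w V : Z → ℝ) (α : ℝ) {n : ℕ} (i : Fin (n + 1)) :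
    condSet w V α i =
      {z | 1 - α ≤ ∑ k, if V (z k) < V (z i) then w (z k) / ∑ j, w (z j) else 0} := by
  ext z; simp [condSet, Finset.sum_filter]

lemma measurableSet_condSet {Z : Type*} [MeasurableSpace Z] {w V : Z → ℝ}
    (hw : Measurable w) (hV : Measurable V) (α : ℝ) {n : ℕ} (i : Fin (n + 1)) :
    MeasurableSet (condSet w V α i) := by
  rw [condSet_eq]
  refine measurableSet_le measurable_const ?_
  refine Finset.measurable_sum _ fun k _ => Measurable.ite ?_ ?_ measurable_const
  · exact measurableSet_lt (hV.comp (measurable_pi_apply k)) (hV.comp (measurable_pi_apply i))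
  · exact (hw.comp (measurable_pi_apply k)).div
      (Finset.measurable_sum _ fun j _ => hw.comp (measurable_pi_apply j))

lemma comp_swap_mem_condSet_iff {Z : Type*} (w V : Z → ℝ) (α : ℝ) {n : ℕ}
    (i : Fin (n + 1)) (z : Fin (n + 1) → Z) :
    (fun k => z (Equiv.swap i (Fin.last n) k)) ∈ condSet w V α (Fin.last n) ↔
      z ∈ condSet w V α i := by
  set σ := Equiv.swap i (Fin.last n) with hσ
  have hσlast : σ (Fin.last n) = i := Equiv.swap_apply_right _ _
  rw [condSet_eq, condSet_eq]
  simp only [Set.mem_setOf_eq]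
  have hden : ∑ j, w (z (σ j)) = ∑ j, w (z j) := Equiv.sum_comp σ (fun j => w (z j))
  have hnum : ∑ k, (if V (z (σ k)) < V (z (σ (Fin.last n))) then
        w (z (σ k)) / ∑ j, w (z (σ j)) else 0)
      = ∑ k, (if V (z k) < V (z i) then w (z k) / ∑ j, w (z j) else 0) := by
    rw [hσlast]
    refine Fintype.sum_equiv σ _ _ fun k => ?_
    rw [hden]
  rw [← hnum]

lemma lintegral_condSet_swap {Z : Type*} [MeasurableSpace Z] {n : ℕ} (Q : Measure Z)
    [IsProbabilityMeasure Q] {w V : Z → ℝ} (hw : Measurable w) (hV : Measurable V)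
    (α : ℝ) (i : Fin (n + 1)) :
    ∫⁻ z, (condSet w V α (Fin.last n)).indicator
        (fun z => ENNReal.ofReal (w (z (Fin.last n)))) z
        ∂(Measure.pi fun _ : Fin (n + 1) => Q)
      = ∫⁻ z, (condSet w V α i).indicator (fun z => ENNReal.ofReal (w (z i))) z
        ∂(Measure.pi fun _ : Fin (n + 1) => Q) := by
  set σ := Equiv.swap i (Fin.last n) with hσ
  set T := (MeasurableEquiv.piCongrLeft (fun _ : Fin (n + 1) => Z) σ).symm with hT
  have hTapp : ∀ (z : Fin (n + 1) → Z) (k : Fin (n + 1)), T z k = z (σ k) := by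
    intro z k
    simp [hT, MeasurableEquiv.piCongrLeft, MeasurableEquiv.symm,
      Equiv.piCongrLeft_symm_apply]
  have hmp : MeasurePreserving T (Measure.pi fun _ : Fin (n + 1) => Q)
      (Measure.pi fun _ : Fin (n + 1) => Q) :=
    (measurePreserving_piCongrLeft (fun _ : Fin (n + 1) => Q) σ).symm
  have hF : Measurable ((condSet w V α (Fin.last n)).indicator
      (fun z : Fin (n + 1) → Z => ENNReal.ofReal (w (z (Fin.last n))))) :=
    Measurable.indicator ((hw.comp (measurable_pi_apply _)).ennreal_ofReal)
      (measurableSet_condSet hw hV α _)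
  rw [← hmp.lintegral_comp hF]
  congr 1
  funext z
  have hTz : T z = fun k => z (σ k) := funext fun k => hTapp z k
  classical
  rw [hTz]
  rw [Set.indicator_apply, Set.indicator_apply]
  have hmem := comp_swap_mem_condSet_iff w V α i z
  have hσlast : σ (Fin.last n) = i := Equiv.swap_apply_right _ _
  by_cases hz : z ∈ condSet w V α i
  · rw [if_pos (hmem.mpr hz), if_pos hz]
    simp only []
    rw [hσlast]
  · rw [if_neg (fun hc => hz (hmem.mp hc)), if_neg hz]

end WCCAux

/-- Weighted conformal prediction under a likelihood-ratio shift. -/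
theorem weighted_conformal_coverage
    {Z : Type*} [MeasurableSpace Z] (Q P : Measure Z)
    [IsProbabilityMeasure Q] [IsProbabilityMeasure P] (hac : P ≪ Q)
    (w : Z → ℝ) (hwmeas : Measurable w) (hw0 : ∀ z, 0 ≤ w z)
    (hwrnd : ∀ᵐ z ∂Q, ENNReal.ofReal (w z) = P.rnDeriv Q z)
    {Ω : Type*} [MeasurableSpace Ω] (μ : Measure Ω) [IsProbabilityMeasure μ]
    (n : ℕ) (hn : 1 ≤ n) (Zi : Fin (n + 1) → Ω → Z) (hZmeas : ∀ i, Measurable (Zi i))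
    (hindep : iIndepFun Zi μ)
    (hlawQ : ∀ i : Fin n, Measure.map (Zi i.castSucc) μ = Q)
    (hlawP : Measure.map (Zi (Fin.last n)) μ = P)
    (V : Z → ℝ) (hV : Measurable V) (α : ℝ) (hα : α ∈ Set.Ioo (0 : ℝ) 1) :
    1 - α ≤
      (μ {x | ((V (Zi (Fin.last n) x) : ℝ) : EReal) ≤
        wQuantile (1 - α)
          (fun i : Fin (n + 1) => w (Zi i x) / ∑ j : Fin (n + 1), w (Zi j x))
          (fun i : Fin (n + 1) =>
            if (i : ℕ) < n then ((V (Zi i x) : ℝ) : EReal) else (⊤ : EReal))}).toReal := by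
  classical
  obtain ⟨hα0, hα1⟩ := hα
  set Sev : Set Ω := {x | ((V (Zi (Fin.last n) x) : ℝ) : EReal) ≤
        wQuantile (1 - α)
          (fun i : Fin (n + 1) => w (Zi i x) / ∑ j : Fin (n + 1), w (Zi j x))
          (fun i : Fin (n + 1) =>
            if (i : ℕ) < n then ((V (Zi i x) : ℝ) : EReal) else (⊤ : EReal))} with hSev
  set g : Z → ℝ≥0∞ := fun z => ENNReal.ofReal (w z) with hgdef
  have hg : Measurable g := hwmeas.ennreal_ofReal
  have hPg : P = Q.withDensity g := ((withDensity_congr_ae hwrnd).trans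
      (Measure.withDensity_rnDeriv_eq P Q hac)).symm
  set Zvec : Ω → (Fin (n + 1) → Z) := fun x i => Zi i x with hZvecdef
  have hZvecMeas : Measurable Zvec := measurable_pi_lambda _ fun i => hZmeas i
  set ν : Fin (n + 1) → Measure Z := fun i => Measure.map (Zi i) μ with hνdef
  haveI hνprob : ∀ i, IsProbabilityMeasure (ν i) := fun i =>
    Measure.isProbabilityMeasure_map (hZmeas i).aemeasurable
  have hmapμ : Measure.map Zvec μ = Measure.pi ν := map_pi_of_iIndep hZmeas hindep
  set π := Measure.pi (fun _ : Fin (n + 1) => Q) with hπdef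
  have hpiν : Measure.pi ν = π.withDensity (fun z => g (z (Fin.last n))) :=
    pi_last_withDensity Q hg ν (fun j => hlawQ j) (by rw [hνdef]; simp only []; rw [hlawP, hPg])
  set C : Set (Fin (n + 1) → Z) := condSet w V α (Fin.last n) with hCdef
  have hCmeas : MeasurableSet C := measurableSet_condSet hwmeas hV α _
  -- the complement of the coverage event
  have hcompl : Sevᶜ = Zvec ⁻¹' C := by
    ext x
    simp only [hSev, Set.mem_compl_iff, Set.mem_setOf_eq, Set.mem_preimage, not_le]
    rw [wQuantile_lt_coe_iff (by linarith)
      (fun i => div_nonneg (hw0 _) (Finset.sum_nonneg fun j _ => hw0 _))]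
    have hfe : (Finset.univ.filter (fun i : Fin (n + 1) =>
          (if (i : ℕ) < n then ((V (Zi i x) : ℝ) : EReal) else (⊤ : EReal))
            < ((V (Zi (Fin.last n) x) : ℝ) : EReal)))
        = Finset.univ.filter
            (fun k : Fin (n + 1) => V (Zi k x) < V (Zi (Fin.last n) x)) := by
      ext k
      simp only [Finset.mem_filter, Finset.mem_univ, true_and]
      by_cases hk : (k : ℕ) < n
      · rw [if_pos hk]; exact EReal.coe_lt_coe_iff
      · have hkl : k = Fin.last n := by
          apply Fin.ext; have := k.isLt; simp only [Fin.val_last]; omega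
        subst hkl
        rw [if_neg hk]
        simp [lt_irrefl]
    rw [hfe]
    rfl
  -- bounding the measure of the complement
  have hswap : ∀ i : Fin (n + 1),
      ∫⁻ z, (condSet w V α (Fin.last n)).indicator
          (fun z => ENNReal.ofReal (w (z (Fin.last n)))) z ∂π
        = ∫⁻ z, (condSet w V α i).indicator (fun z => ENNReal.ofReal (w (z i))) z ∂π :=
    fun i => lintegral_condSet_swap Q hwmeas hV α i
  have hGmeas : ∀ i : Fin (n + 1), Measurable
      ((condSet w V α i).indicator (fun z : Fin (n + 1) → Z => ENNReal.ofReal (w (z i)))) :=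
    fun i => Measurable.indicator ((hwmeas.comp (measurable_pi_apply i)).ennreal_ofReal)
      (measurableSet_condSet hwmeas hV α i)
  have hgi : ∀ i : Fin (n + 1), Measurable fun z : Fin (n + 1) → Z => g (z i) :=
    fun i => by exact hg.comp (measurable_pi_apply i)
  have hint1 : ∀ i : Fin (n + 1), ∫⁻ z, g (z i) ∂π = 1 := by
    intro i
    have hmp := measurePreserving_piFinSuccAbove (fun _ : Fin (n + 1) => Q) i
    calc ∫⁻ z, g (z i) ∂π
        = ∫⁻ p : Z × (Fin n → Z), g p.1 ∂(Q.prod (Measure.pi fun _ : Fin n => Q)) := by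
          rw [← hmp.lintegral_comp (f := fun p : Z × (Fin n → Z) => g p.1)
            (hg.comp measurable_fst)]
          rfl
      _ = ∫⁻ a, g a ∂Q := by
          rw [lintegral_prod (fun p : Z × (Fin n → Z) => g p.1)
            ((hg.comp measurable_fst)).aemeasurable]
          simp
      _ = 1 := by
          rw [lintegral_congr_ae hwrnd, Measure.lintegral_rnDeriv hac]
          exact measure_univ
  have hpt : ∀ z : Fin (n + 1) → Z,
      ∑ i, (condSet w V α i).indicator (fun z => ENNReal.ofReal (w (z i))) z
        ≤ ENNReal.ofReal α * ∑ i, g (z i) := by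
    intro z
    have hkey := key_det (ι := Fin (n + 1)) hα0 (fun k => w (z k)) (fun k => hw0 _)
      (fun k => V (z k))
    have hL : ∑ i, (condSet w V α i).indicator (fun z => ENNReal.ofReal (w (z i))) z
        = ENNReal.ofReal (∑ i, if z ∈ condSet w V α i then w (z i) else 0) := by
      rw [ENNReal.ofReal_sum_of_nonneg (fun i _ => by split <;> simp [hw0])]
      refine Finset.sum_congr rfl fun i _ => ?_
      rw [Set.indicator_apply]
      split <;> simp
    have hR : ENNReal.ofReal α * ∑ i, g (z i) = ENNReal.ofReal (α * ∑ i, w (z i)) := by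
      rw [ENNReal.ofReal_mul hα0.le, ENNReal.ofReal_sum_of_nonneg (fun i _ => hw0 _)]
    rw [hL, hR]
    apply ENNReal.ofReal_le_ofReal
    rw [← Finset.sum_filter]
    have hfilter : Finset.univ.filter (fun i : Fin (n + 1) => z ∈ condSet w V α i)
        = Finset.univ.filter (fun i : Fin (n + 1) => 1 - α ≤
            ∑ k ∈ Finset.univ.filter (fun k => V (z k) < V (z i)), w (z k) / ∑ j, w (z j)) := by
      refine Finset.filter_congr fun i _ => ?_
      simp [condSet, Set.mem_setOf_eq]
    rw [hfilter]
    exact hkey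
  have htot : ∫⁻ z, ∑ i, g (z i) ∂π = (n : ℝ≥0∞) + 1 := by
    rw [lintegral_finset_sum _ (fun i _ => hgi i)]
    simp only [hint1]
    simp
  have hsum : ((n : ℝ≥0∞) + 1) * ∫⁻ z, (condSet w V α (Fin.last n)).indicator
      (fun z => ENNReal.ofReal (w (z (Fin.last n)))) z ∂π
      = ∫⁻ z, ∑ i, (condSet w V α i).indicator (fun z => ENNReal.ofReal (w (z i))) z ∂π := by
    rw [lintegral_finset_sum _ (fun i _ => hGmeas i)]
    have hc : ∀ i ∈ Finset.univ, (∫⁻ z, (condSet w V α i).indicator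
        (fun z => ENNReal.ofReal (w (z i))) z ∂π)
        = ∫⁻ z, (condSet w V α (Fin.last n)).indicator
          (fun z => ENNReal.ofReal (w (z (Fin.last n)))) z ∂π := fun i _ => (hswap i).symm
    rw [Finset.sum_congr rfl hc, Finset.sum_const, Finset.card_univ, Fintype.card_fin,
      nsmul_eq_mul]
    push_cast
    ring
  have hone_ne : ((n : ℝ≥0∞) + 1) ≠ 0 := by simp
  have htop_ne : ((n : ℝ≥0∞) + 1) ≠ ⊤ := by
    exact ENNReal.add_ne_top.mpr ⟨ENNReal.natCast_ne_top n, ENNReal.one_ne_top⟩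
  have hIle : ∫⁻ z, (condSet w V α (Fin.last n)).indicator
      (fun z => ENNReal.ofReal (w (z (Fin.last n)))) z ∂π ≤ ENNReal.ofReal α := by
    refine (ENNReal.mul_le_mul_iff_right hone_ne htop_ne).mp ?_
    rw [hsum]
    calc ∫⁻ z, ∑ i, (condSet w V α i).indicator (fun z => ENNReal.ofReal (w (z i))) z ∂π
        ≤ ∫⁻ z, ENNReal.ofReal α * ∑ i, g (z i) ∂π := lintegral_mono hpt
      _ = ENNReal.ofReal α * ((n : ℝ≥0∞) + 1) := by
          rw [lintegral_const_mul _ (Finset.measurable_sum _ (fun i _ => hgi i)), htot]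
      _ = ((n : ℝ≥0∞) + 1) * ENNReal.ofReal α := mul_comm _ _
  have hμcompl : μ Sevᶜ ≤ ENNReal.ofReal α := by
    rw [hcompl, ← Measure.map_apply hZvecMeas hCmeas, hmapμ, hpiν,
      withDensity_apply _ hCmeas, ← lintegral_indicator hCmeas]
    exact hIle
  -- conclusion
  have h1 : (1 : ℝ≥0∞) ≤ μ Sev + μ Sevᶜ := by
    rw [← measure_univ (μ := μ), ← Set.union_compl_self Sev]
    exact measure_union_le _ _
  have h2 : ENNReal.ofReal (1 - α) ≤ μ Sev := by
    rw [ENNReal.ofReal_sub _ hα0.le, ENNReal.ofReal_one, tsub_le_iff_right]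
    calc (1 : ℝ≥0∞) ≤ μ Sev + μ Sevᶜ := h1
      _ ≤ μ Sev + ENNReal.ofReal α := by gcongr
  have h3 := ENNReal.toReal_mono (measure_ne_top μ Sev) h2
  rwa [ENNReal.toReal_ofReal (by linarith)] at h3
end

section
/- Let d, n ≥ 1, α ∈ (0,1), and let s : X_NA × ℝ → ℝ be measurable. On a common probability space, let (X̂^1, Y^1), …, (X̂^n, Y^n) be i.i.d. with law Q on ℝ^d × ℝ, and let (X^{n+1}, M^{n+1}, Y^{n+1}), taking values in ℝ^d × {0,1}^d × ℝ, be independent of them. Let P_{XY} denote the law of (X^{n+1}, Y^{n+1}). Fix m ∈ {0,1}^d with P(M^{n+1} = m) > 0, and let P^m_{XY} denote the conditional law of (X^{n+1}, Y^{n+1}) given {M^{n+1} = m}; note P^m_{XY} is automatically absolutely continuous with respect to P_{XY}. Define the calibration scores S^i := s(mask(X̂^i, m), Y^i) for i ≤ n, the quantile q̂ := Quantile_{1−α}( (Σ_{i=1}^n δ_{S^i} + δ_{+∞})/(n+1) ), and the split conformal set Ĉ(x̃) := { y ∈ ℝ : s(x̃, y) ≤ q̂ }. Then P( Y^{n+1}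 ∈ Ĉ(mask(X^{n+1}, M^{n+1})) | M^{n+1} = m ) ≥ 1 − α − ( d_TV(P_{XY}, Q) + E_{(x,y) ∼ P_{XY}}[ | (dP^m_{XY}/dP_{XY})(x,y) − 1 | ] ). Moreover, if (X^{n+1}, Y^{n+1}) is independent of M^{n+1} (the MCAR case), then P( Y^{n+1} ∈ Ĉ(mask(X^{n+1}, M^{n+1})) | M^{n+1} = m ) ≥ 1 − α − d_TV(P_{XY}, Q). -/
open MeasureTheory ProbabilityTheory
open scoped ENNReal

universe u

/- auxiliary lemmas -/

lemma measurable_some_real : Measurable (fun r : ℝ => (some r : Option ℝ)) := by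
  intro t ht
  obtain ⟨u, hu, rfl⟩ := ht
  have : (fun r : ℝ => (some r : Option ℝ)) ⁻¹' ((Equiv.optionEquivSumPUnit.{0,0} ℝ) ⁻¹' u)
      = Sum.inl ⁻¹' u := rfl
  rw [this]
  exact measurable_inl hu

lemma sum_option_filter {n : ℕ} (sc : Fin n → ℝ) (r : ℝ) (w : ℝ) :
    (∑ i ∈ Finset.univ.filter
      (fun i : Option (Fin n) => (i.elim (⊤ : EReal) fun j => ((sc j : ℝ) : EReal)) ≤ (r : EReal)),
        w)
    = ∑ j ∈ Finset.univ.filter (fun j => sc j ≤ r), w := by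
  rw [Finset.sum_filter, Finset.sum_filter, Fintype.sum_option]
  simp [top_le_iff, EReal.coe_le_coe_iff]

lemma le_splitQuantile {n : ℕ} {β y : ℝ} {sc : Fin n → ℝ}
    (h : ∀ r : ℝ, β ≤ ∑ _i ∈ Finset.univ.filter (fun i => sc i ≤ r), (1/(n+1:ℝ)) → y ≤ r) :
    (y : EReal) ≤ splitQuantile β sc := by
  apply le_sInf
  rintro z ⟨r, rfl, hr⟩
  rw [sum_option_filter] at hr
  exact EReal.coe_le_coe_iff.mpr (h r hr)

lemma le_splitQuantile_iff {n : ℕ} {β y : ℝ} {sc : Fin n → ℝ} :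
    (y : EReal) ≤ splitQuantile β sc ↔
      ∀ q : ℚ, β ≤ ∑ _i ∈ Finset.univ.filter (fun i => sc i ≤ (q:ℝ)), (1/(n+1:ℝ)) → y ≤ q := by
  constructor
  · intro h q hq
    have h2 : splitQuantile β sc ≤ (((q:ℝ)) : EReal) := by
      apply sInf_le
      exact ⟨(q:ℝ), rfl, by rw [sum_option_filter]; exact hq⟩
    exact EReal.coe_le_coe_iff.mp (le_trans h h2)
  · intro h
    apply le_splitQuantile
    intro r hr
    by_contra hyr
    push_neg at hyr
    obtain ⟨q, hq1, hq2⟩ := exists_rat_btwn hyr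
    have hsum : β ≤ ∑ _i ∈ Finset.univ.filter (fun i => sc i ≤ (q:ℝ)), (1/(n+1:ℝ)) := by
      refine le_trans hr (Finset.sum_le_sum_of_subset_of_nonneg ?_ ?_)
      · intro i hi
        simp only [Finset.mem_filter, Finset.mem_univ, true_and] at hi ⊢
        linarith
      · intro i _ _; positivity
    have := h q hsum
    linarith

lemma rank_count {N : ℕ} (t : Fin N → ℝ) (k : ℕ) :
    min k N ≤ (Finset.univ.filter fun j =>
      (Finset.univ.filter fun i => t i < t j).card + 1 ≤ k).card := by
  classical
  set A := Finset.univ.filter fun j : Fin N =>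
      (Finset.univ.filter fun i => t i < t j).card + 1 ≤ k with hA
  rcases (Aᶜ).eq_empty_or_nonempty with h | h
  · have : A = Finset.univ := by
      rwa [Finset.compl_eq_empty_iff] at h
    rw [this, Finset.card_univ, Fintype.card_fin]
    exact min_le_right _ _
  · obtain ⟨j₀, hj₀mem, hmin⟩ := Finset.exists_min_image (Aᶜ) t h
    have hj₀ : ¬ ((Finset.univ.filter fun i => t i < t j₀).card + 1 ≤ k) := by
      have := Finset.mem_compl.mp hj₀mem
      simpa [hA] using this
    have hsub : (Finset.univ.filter fun i => t i < t j₀) ⊆ A := by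
      intro i hi
      simp only [Finset.mem_filter, Finset.mem_univ, true_and] at hi
      by_contra hiA
      have : i ∈ Aᶜ := Finset.mem_compl.mpr hiA
      have := hmin i this
      linarith
    have hk : k ≤ (Finset.univ.filter fun i => t i < t j₀).card := by omega
    exact le_trans (min_le_left _ _) (le_trans hk (Finset.card_le_card hsub))

lemma abs_le_tvDist {Z : Type*} [MeasurableSpace Z] (P Q : Measure Z)
    [IsFiniteMeasure P] [IsFiniteMeasure Q] {A : Set Z} (hA : MeasurableSet A) :
    |(P A).toReal - (Q A).toReal| ≤ tvDist P Q := by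
  have hbdd : BddAbove (Set.range fun A : {A : Set Z // MeasurableSet A} =>
      |(P A.1).toReal - (Q A.1).toReal|) := by
    refine ⟨(P Set.univ).toReal + (Q Set.univ).toReal, ?_⟩
    rintro _ ⟨B, rfl⟩
    refine le_trans (abs_sub _ _) (add_le_add ?_ ?_)
    · rw [abs_of_nonneg ENNReal.toReal_nonneg]
      exact ENNReal.toReal_mono (measure_ne_top _ _) (measure_mono (Set.subset_univ _))
    · rw [abs_of_nonneg ENNReal.toReal_nonneg]
      exact ENNReal.toReal_mono (measure_ne_top _ _) (measure_mono (Set.subset_univ _))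
  exact le_ciSup hbdd ⟨A, hA⟩

section cov
variable {pt : Type*} [MeasurableSpace pt]

lemma card_filter_perm {N : ℕ} (σ : Equiv.Perm (Fin N)) (p : Fin N → Prop) [DecidablePred p] :
    (Finset.univ.filter fun i => p (σ i)).card = (Finset.univ.filter p).card := by
  apply Finset.card_bij (fun i _ => σ i)
  · intro a ha
    simp only [Finset.mem_filter, Finset.mem_univ, true_and] at ha ⊢
    exact ha
  · intro a _ b _ h
    exact σ.injective h
  · intro b hb
    refine ⟨σ.symm b, ?_, by simp⟩
    simp only [Finset.mem_filter, Finset.mem_univ, true_and, Equiv.apply_symm_apply] at hb ⊢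
    exact hb

lemma splitE_measurable {n : ℕ} (β : ℝ) (sc0 : pt → ℝ) (hsc0 : Measurable sc0) :
    MeasurableSet {p : (Fin n → pt) × pt |
      (sc0 p.2 : EReal) ≤ splitQuantile β (fun i => sc0 (p.1 i))} := by
  have hE : {p : (Fin n → pt) × pt |
      (sc0 p.2 : EReal) ≤ splitQuantile β (fun i => sc0 (p.1 i))}
      = ⋂ q : ℚ, {p : (Fin n → pt) × pt |
          β ≤ ∑ _i ∈ Finset.univ.filter (fun i => sc0 (p.1 i) ≤ (q:ℝ)), (1/(n+1:ℝ))}ᶜ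
        ∪ {p : (Fin n → pt) × pt | sc0 p.2 ≤ (q:ℝ)} := by
    ext p
    simp only [Set.mem_setOf_eq, Set.mem_iInter, Set.mem_union, Set.mem_compl_iff,
      le_splitQuantile_iff]
    refine forall_congr' fun q => ?_
    tauto
  rw [hE]
  refine MeasurableSet.iInter fun q => MeasurableSet.union ?_ ?_
  · apply MeasurableSet.compl
    have hW : Measurable (fun v : Fin n → pt =>
        ∑ _i ∈ Finset.univ.filter (fun i => sc0 (v i) ≤ (q:ℝ)), (1/(n+1:ℝ))) := by
      have : (fun v : Fin n → pt =>
          ∑ _i ∈ Finset.univ.filter (fun i => sc0 (v i) ≤ (q:ℝ)), (1/(n+1:ℝ)))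
          = fun v => ∑ i : Fin n, if sc0 (v i) ≤ (q:ℝ) then (1/(n+1:ℝ)) else 0 := by
        funext v; rw [Finset.sum_filter]
      rw [this]
      refine Finset.measurable_sum _ fun i _ => Measurable.ite ?_ measurable_const
        measurable_const
      exact measurableSet_le (hsc0.comp (measurable_pi_apply i)) measurable_const
    exact measurable_fst (measurableSet_le measurable_const hW)
  · exact measurable_snd (measurableSet_le hsc0 measurable_const)

lemma coverage_ge (n : ℕ) (β : ℝ) (hβ0 : 0 < β) (hβ1 : β < 1)
    (sc0 : pt → ℝ) (hsc0 : Measurable sc0) (Q : Measure pt) [IsProbabilityMeasure Q] :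
    ENNReal.ofReal β ≤ ((Measure.pi fun _ : Fin n => Q).prod Q)
      {p : (Fin n → pt) × pt | (sc0 p.2 : EReal) ≤ splitQuantile β (fun i => sc0 (p.1 i))} := by
  classical
  set E := {p : (Fin n → pt) × pt |
    (sc0 p.2 : EReal) ≤ splitQuantile β (fun i => sc0 (p.1 i))} with hEdef
  have hE : MeasurableSet E := splitE_measurable β sc0 hsc0
  set k := ⌈β * (n+1)⌉₊ with hk
  set P1 := Measure.pi (fun _ : Fin (n+1) => Q) with hP1
  set Gset : Fin (n+1) → Set (Fin (n+1) → pt) := fun j =>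
    {f | (Finset.univ.filter fun i => sc0 (f i) < sc0 (f j)).card + 1 ≤ k} with hGset
  -- measurability of Gset j
  have hGmeas : ∀ j, MeasurableSet (Gset j) := by
    intro j
    have hcard : Measurable (fun f : Fin (n+1) → pt =>
        (Finset.univ.filter fun i => sc0 (f i) < sc0 (f j)).card) := by
      have : (fun f : Fin (n+1) → pt =>
          (Finset.univ.filter fun i => sc0 (f i) < sc0 (f j)).card)
          = fun f => ∑ i : Fin (n+1), if sc0 (f i) < sc0 (f j) then 1 else 0 := by
        funext f; rw [Finset.card_filter]
      rw [this]
      refine Finset.measurable_sum _ fun i _ => Measurable.ite ?_ measurable_const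
        measurable_const
      exact measurableSet_lt (hsc0.comp (measurable_pi_apply i))
        (hsc0.comp (measurable_pi_apply j))
    exact hcard (MeasurableSet.of_discrete (s := {c : ℕ | c + 1 ≤ k}))
  -- counting bound pointwise
  have hcount : ∀ f : Fin (n+1) → pt, ((min k (n+1) : ℕ) : ℝ≥0∞)
      ≤ ∑ j : Fin (n+1), if f ∈ Gset j then (1:ℝ≥0∞) else 0 := by
    intro f
    have h1 := rank_count (fun i => sc0 (f i)) k
    have h2 : ∑ j : Fin (n+1), (if f ∈ Gset j then (1:ℝ≥0∞) else 0)
        = ((Finset.univ.filter fun j : Fin (n+1) => f ∈ Gset j).card : ℝ≥0∞) := by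
      rw [Finset.card_filter]
      push_cast
      rfl
    rw [h2]
    have : (Finset.univ.filter fun j : Fin (n+1) => f ∈ Gset j)
        = Finset.univ.filter fun j : Fin (n+1) =>
            (Finset.univ.filter fun i => sc0 (f i) < sc0 (f j)).card + 1 ≤ k := rfl
    rw [this]
    exact_mod_cast Nat.cast_le.mpr h1
  -- integral bound
  have hsumP : ((min k (n+1) : ℕ) : ℝ≥0∞) ≤ ∑ j : Fin (n+1), P1 (Gset j) := by
    have hlin : ∑ j : Fin (n+1), P1 (Gset j)
        = ∫⁻ f, ∑ j : Fin (n+1), (if f ∈ Gset j then (1:ℝ≥0∞) else 0) ∂P1 := by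
      rw [lintegral_finset_sum]
      · refine Finset.sum_congr rfl fun j _ => ?_
        have : ∀ f, (if f ∈ Gset j then (1:ℝ≥0∞) else 0) = (Gset j).indicator 1 f := by
          intro f; simp [Set.indicator_apply]
        simp_rw [this]
        rw [lintegral_indicator_one (hGmeas j)]
      · intro j _
        exact Measurable.ite (hGmeas j) measurable_const measurable_const
    rw [hlin]
    calc ((min k (n+1) : ℕ) : ℝ≥0∞)
        = ∫⁻ _, ((min k (n+1) : ℕ) : ℝ≥0∞) ∂P1 := by simp
      _ ≤ _ := lintegral_mono hcount
  -- exchangeability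
  have hexch : ∀ j, P1 (Gset j) = P1 (Gset (Fin.last n)) := by
    intro j
    set σ := Equiv.swap j (Fin.last n) with hσ
    have hmp : MeasurePreserving (MeasurableEquiv.arrowCongr' σ (MeasurableEquiv.refl pt))
        P1 P1 := by
      exact measurePreserving_arrowCongr' (fun _ => Q) (fun _ => Q) σ (MeasurableEquiv.refl pt)
        (fun _ => MeasurePreserving.id Q)
    have hpre : (MeasurableEquiv.arrowCongr' σ (MeasurableEquiv.refl pt)) ⁻¹' (Gset j)
        = Gset (Fin.last n) := by
      ext f
      have happ : ∀ i, (MeasurableEquiv.arrowCongr' σ (MeasurableEquiv.refl pt)) f i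
          = f (σ.symm i) := by
        intro i; rfl
      simp only [hGset, Set.mem_preimage, Set.mem_setOf_eq, happ]
      have hcf : (Finset.univ.filter fun i => sc0 (f (σ.symm i)) < sc0 (f (σ.symm j))).card
          = (Finset.univ.filter fun i => sc0 (f i) < sc0 (f (σ.symm j))).card :=
        card_filter_perm σ.symm (fun i => sc0 (f i) < sc0 (f (σ.symm j)))
      rw [hcf]
      have : σ.symm j = Fin.last n := by
        rw [hσ]; simp [Equiv.swap_apply_left]
      rw [this]
    rw [← hpre, hmp.measure_preimage (hGmeas j).nullMeasurableSet]
  -- conclude ofReal β ≤ P1 (Gset last)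
  have hsum2 : ((min k (n+1) : ℕ) : ℝ≥0∞) ≤ (n+1) * P1 (Gset (Fin.last n)) := by
    calc ((min k (n+1) : ℕ) : ℝ≥0∞) ≤ ∑ j : Fin (n+1), P1 (Gset j) := hsumP
      _ = ∑ _j : Fin (n+1), P1 (Gset (Fin.last n)) := by
          exact Finset.sum_congr rfl fun j _ => hexch j
      _ = (n+1) * P1 (Gset (Fin.last n)) := by
          rw [Finset.sum_const, Finset.card_univ, Fintype.card_fin, nsmul_eq_mul]
          push_cast; ring
  have hofβ : ENNReal.ofReal β * (n+1) ≤ ((min k (n+1) : ℕ) : ℝ≥0∞) := by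
    have hreal : β * (n+1) ≤ ((min k (n+1) : ℕ) : ℝ) := by
      rcases le_total (k : ℝ) ((n+1 : ℕ) : ℝ) with h | h
      · have : (min k (n+1) : ℕ) = k := by
          apply min_eq_left; exact_mod_cast h
        rw [this]; exact Nat.le_ceil _
      · have : (min k (n+1) : ℕ) = n+1 := by
          apply min_eq_right; exact_mod_cast h
        rw [this]; push_cast; nlinarith
    calc ENNReal.ofReal β * (n+1) = ENNReal.ofReal β * ENNReal.ofReal ((n+1 : ℕ) : ℝ) := by
          rw [ENNReal.ofReal_natCast]; push_cast; ring_nf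
      _ = ENNReal.ofReal (β * ((n+1:ℕ):ℝ)) := (ENNReal.ofReal_mul hβ0.le).symm
      _ ≤ ENNReal.ofReal ((min k (n+1) : ℕ) : ℝ) := by
          apply ENNReal.ofReal_le_ofReal; push_cast at hreal ⊢; linarith
      _ = ((min k (n+1) : ℕ) : ℝ≥0∞) := ENNReal.ofReal_natCast _
  have hβP : ENNReal.ofReal β ≤ P1 (Gset (Fin.last n)) := by
    have h3 : ENNReal.ofReal β * (n+1) ≤ P1 (Gset (Fin.last n)) * (n+1) := by
      calc ENNReal.ofReal β * (n+1) ≤ (n+1) * P1 (Gset (Fin.last n)) :=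
            le_trans hofβ hsum2
        _ = P1 (Gset (Fin.last n)) * (n+1) := mul_comm _ _
    exact (ENNReal.mul_le_mul_iff_left (lt_of_lt_of_le zero_lt_one le_add_self).ne' (by simp)).mp h3
  -- transfer to product measure
  have hψ := measurePreserving_piFinSuccAbove (fun _ : Fin (n+1) => Q) (Fin.last n)
  have hswap : ((Measure.pi fun _ : Fin n => Q).prod Q) E
      = (Q.prod (Measure.pi fun _ : Fin n => Q)) (Prod.swap ⁻¹' E) := by
    rw [← Measure.prod_swap, Measure.map_apply measurable_swap hE]
  have hsub : Gset (Fin.last n) ⊆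
      (MeasurableEquiv.piFinSuccAbove (fun _ : Fin (n+1) => pt) (Fin.last n))
        ⁻¹' (Prod.swap ⁻¹' E) := by
    intro f hf
    have hfeq : (MeasurableEquiv.piFinSuccAbove (fun _ : Fin (n+1) => pt) (Fin.last n)) f
        = (f (Fin.last n), Fin.removeNth (Fin.last n) f) := rfl
    simp only [hGset, Set.mem_setOf_eq] at hf
    simp only [Set.mem_preimage, hfeq, Prod.swap_prod_mk, hEdef, Set.mem_setOf_eq]
    apply le_splitQuantile
    intro r hr
    by_contra hyr
    push_neg at hyr
    set m₀ := (Finset.univ.filter fun i : Fin n =>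
      sc0 (Fin.removeNth (Fin.last n) f i) ≤ r).card with hm₀
    have hrsum : β ≤ (m₀ : ℝ) * (1/(n+1:ℝ)) := by
      rw [hm₀]
      calc β ≤ _ := hr
        _ = _ := by rw [Finset.sum_const, nsmul_eq_mul]
    have hm0 : β * (n+1) ≤ (m₀:ℝ) := by
      have hpos : (0:ℝ) < n+1 := by positivity
      rw [mul_one_div] at hrsum
      calc β * (n+1) ≤ ((m₀:ℝ)/(n+1)) * (n+1) := by nlinarith
        _ = (m₀:ℝ) := by field_simp
    have hinj : m₀ ≤ (Finset.univ.filter fun i : Fin (n+1) =>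
        sc0 (f i) < sc0 (f (Fin.last n))).card := by
      apply Finset.card_le_card_of_injOn (fun i => Fin.castSucc i)
      · intro i hi
        simp only [Finset.mem_coe, Finset.mem_filter, Finset.mem_univ, true_and] at hi ⊢
        have : Fin.removeNth (Fin.last n) f i = f (Fin.castSucc i) := by
          rw [Fin.removeNth]
          congr 1
          exact Fin.succAbove_last_apply i
        rw [this] at hi
        linarith
      · intro a _ b _ h
        exact Fin.castSucc_injective _ h
    have hfG : (Finset.univ.filter fun i : Fin (n+1) =>
        sc0 (f i) < sc0 (f (Fin.last n))).card + 1 ≤ k := hf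
    have hkceil : (k:ℝ) < β * (n+1) + 1 := by
      rw [hk]
      have := Nat.ceil_lt_add_one (by positivity : (0:ℝ) ≤ β * (n+1))
      push_cast at this ⊢
      linarith
    have hnat : m₀ + 1 ≤ k := by omega
    have : (m₀:ℝ) + 1 ≤ (k:ℝ) := by exact_mod_cast hnat
    linarith
  calc ENNReal.ofReal β ≤ P1 (Gset (Fin.last n)) := hβP
    _ ≤ P1 ((MeasurableEquiv.piFinSuccAbove (fun _ : Fin (n+1) => pt) (Fin.last n))
        ⁻¹' (Prod.swap ⁻¹' E)) := measure_mono hsub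
    _ = (Q.prod (Measure.pi fun _ : Fin n => Q)) (Prod.swap ⁻¹' E) :=
        hψ.measure_preimage ((measurable_swap hE).nullMeasurableSet)
    _ = ((Measure.pi fun _ : Fin n => Q).prod Q) E := hswap.symm

end cov


/-- Coverage bound for split conformal after impute-then-mask.
With calibration pairs i.i.d. `~ Q` and test triple independent of them, the split conformal
set built on the masked calibration scores has mask-conditional coverage at least
`1 - α - (d_TV(P_XY, Q) + E_{P_XY}|dP^m_XY/dP_XY - 1|)`; and at least `1 - α - d_TV(P_XY, Q)`
if `(X^{n+1}, Y^{n+1})` is independent of `M^{n+1}` (MCAR). -/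
theorem split_conformal_impute_mask_coverage_bound
    (d n : ℕ) (hd : 1 ≤ d) (hn : 1 ≤ n) (α : ℝ) (hα : α ∈ Set.Ioo (0 : ℝ) 1)
    (s : (Fin d → Option ℝ) × ℝ → ℝ) (hs : Measurable s)
    (Q : Measure ((Fin d → ℝ) × ℝ)) [IsProbabilityMeasure Q]
    {Ω : Type*} [MeasurableSpace Ω] (μ : Measure Ω) [IsProbabilityMeasure μ]
    (XY : Fin n → Ω → (Fin d → ℝ) × ℝ) (hXYmeas : ∀ i, Measurable (XY i))
    (hXYiid : iIndepFun XY μ)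
    (hXYlaw : ∀ i, Measure.map (XY i) μ = Q)
    (Xt : Ω → Fin d → ℝ) (Mt : Ω → Fin d → Bool) (Yt : Ω → ℝ)
    (hXt : Measurable Xt) (hMt : Measurable Mt) (hYt : Measurable Yt)
    (hindep : IndepFun (fun x => fun i => XY i x) (fun x => (Xt x, Mt x, Yt x)) μ)
    (m : Fin d → Bool) (hm : μ {x | Mt x = m} ≠ 0)
    (Pxy : Measure ((Fin d → ℝ) × ℝ))
    (hPxy : Pxy = Measure.map (fun x => (Xt x, Yt x)) μ)
    (Pmxy : Measure ((Fin d → ℝ) × ℝ))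
    (hPmxy : Pmxy = Measure.map (fun x => (Xt x, Yt x)) (μ[|{x | Mt x = m}])) :
    (1 - α - (tvDist Pxy Q + ∫ z, |(Pmxy.rnDeriv Pxy z).toReal - 1| ∂Pxy) ≤
      ((μ[|{x | Mt x = m}]) {x | ((s (maskOp (Xt x) (Mt x), Yt x) : ℝ) : EReal) ≤
        splitQuantile (1 - α)
          (fun i : Fin n => s (maskOp (XY i x).1 m, (XY i x).2))}).toReal) ∧
    (IndepFun (fun x => (Xt x, Yt x)) Mt μ →
      1 - α - tvDist Pxy Q ≤
        ((μ[|{x | Mt x = m}]) {x | ((s (maskOp (Xt x) (Mt x), Yt x) : ℝ) : EReal) ≤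
          splitQuantile (1 - α)
            (fun i : Fin n => s (maskOp (XY i x).1 m, (XY i x).2))}).toReal) := by
  classical
  obtain ⟨hα0, hα1⟩ := hα
  have hβ0 : (0:ℝ) < 1 - α := by linarith
  have hβ1 : (1:ℝ) - α < 1 := by linarith
  -- basic objects
  set sc0 : (Fin d → ℝ) × ℝ → ℝ := fun z => s (maskOp z.1 m, z.2) with hsc0def
  have hmaskm : Measurable (fun x : Fin d → ℝ => maskOp x m) := by
    apply measurable_pi_lambda
    intro j
    by_cases hb : m j
    · simp only [maskOp, hb, if_true]
      exact measurable_const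
    · simp only [maskOp, hb, Bool.false_eq_true, if_false]
      exact measurable_some_real.comp (measurable_pi_apply j)
  have hsc0 : Measurable sc0 :=
    hs.comp ((hmaskm.comp measurable_fst).prodMk measurable_snd)
  set E := {p : (Fin n → (Fin d → ℝ) × ℝ) × ((Fin d → ℝ) × ℝ) |
    (sc0 p.2 : EReal) ≤ splitQuantile (1-α) (fun i => sc0 (p.1 i))} with hEdef
  have hE : MeasurableSet E := splitE_measurable (1-α) sc0 hsc0
  set B := {x | Mt x = m} with hBdef
  have hBmeas : MeasurableSet B := hMt (measurableSet_singleton m)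
  have hBfin : μ B ≠ ∞ := measure_ne_top μ B
  haveI hμ' : IsProbabilityMeasure (μ[|B]) := cond_isProbabilityMeasure hm
  set vec : Ω → (Fin n → (Fin d → ℝ) × ℝ) := fun x i => XY i x with hvecdef
  have hvec : Measurable vec := measurable_pi_lambda _ hXYmeas
  set test : Ω → (Fin d → ℝ) × ℝ := fun x => (Xt x, Yt x) with htestdef
  have htest : Measurable test := hXt.prodMk hYt
  set Qn := Measure.pi (fun _ : Fin n => Q) with hQndef
  haveI : IsProbabilityMeasure Pxy := by
    rw [hPxy]; exact Measure.isProbabilityMeasure_map htest.aemeasurable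
  haveI : IsProbabilityMeasure Pmxy := by
    rw [hPmxy]; exact Measure.isProbabilityMeasure_map htest.aemeasurable
  -- law of the calibration vector
  have hmapvec : Measure.map vec μ = Qn := by
    rw [hQndef]
    refine (Measure.pi_eq (μ := fun _ : Fin n => Q) fun sets hsets => ?_).symm
    rw [Measure.map_apply hvec (MeasurableSet.univ_pi hsets)]
    have hpre : vec ⁻¹' (Set.univ.pi sets) = ⋂ i ∈ Finset.univ, XY i ⁻¹' sets i := by
      ext x; simp [Set.mem_pi, hvecdef]
    rw [hpre, hXYiid.measure_inter_preimage_eq_mul Finset.univ (fun i _ => hsets i)]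
    refine Finset.prod_congr rfl fun i _ => ?_
    rw [← hXYlaw i, Measure.map_apply (hXYmeas i) (hsets i)]
  -- B as a preimage of the triple
  set triple : Ω → (Fin d → ℝ) × (Fin d → Bool) × ℝ := fun x => (Xt x, Mt x, Yt x)
    with htrip
  set T1 : Set ((Fin d → ℝ) × (Fin d → Bool) × ℝ) := {p | p.2.1 = m} with hT1def
  have hT1 : MeasurableSet T1 :=
    (measurable_fst.comp measurable_snd) (measurableSet_singleton m)
  have hBtrip : B = triple ⁻¹' T1 := rfl
  -- independence facts under the conditional measure
  have hvecB : ∀ V : Set (Fin n → (Fin d → ℝ) × ℝ), MeasurableSet V →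
      (μ[|B]) (vec ⁻¹' V) = μ (vec ⁻¹' V) := by
    intro V hV
    rw [cond_apply hBmeas]
    have : B ∩ vec ⁻¹' V = vec ⁻¹' V ∩ triple ⁻¹' T1 := by
      rw [hBtrip, Set.inter_comm]
    rw [this, hindep.measure_inter_preimage_eq_mul V T1 hV hT1]
    have : μ (triple ⁻¹' T1) = μ B := by rw [hBtrip]
    rw [this, mul_comm (μ (vec ⁻¹' V)) (μ B), ← mul_assoc,
      ENNReal.inv_mul_cancel hm hBfin, one_mul]
  have hindep' : IndepFun vec test (μ[|B]) := by
    rw [indepFun_iff_measure_inter_preimage_eq_mul]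
    intro V T hV hT
    set T2 : Set ((Fin d → ℝ) × (Fin d → Bool) × ℝ) :=
      {p | p.2.1 = m ∧ (p.1, p.2.2) ∈ T} with hT2def
    have hT2 : MeasurableSet T2 := by
      refine MeasurableSet.inter hT1 ?_
      exact (measurable_fst.prodMk (measurable_snd.comp measurable_snd)) hT
    have hint : B ∩ (vec ⁻¹' V ∩ test ⁻¹' T) = vec ⁻¹' V ∩ triple ⁻¹' T2 := by
      ext x
      simp only [hBdef, Set.mem_inter_iff, Set.mem_setOf_eq, Set.mem_preimage, hT2def,
        htestdef, htrip]
      tauto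
    have hint2 : B ∩ test ⁻¹' T = triple ⁻¹' T2 := by
      ext x
      simp only [hBdef, Set.mem_inter_iff, Set.mem_setOf_eq, Set.mem_preimage, hT2def,
        htestdef, htrip]
    rw [cond_apply hBmeas, hint, hindep.measure_inter_preimage_eq_mul V T2 hV hT2,
      hvecB V hV, cond_apply hBmeas, hint2]
    ring
  have hmapvec' : Measure.map vec (μ[|B]) = Qn := by
    refine Measure.ext fun V hV => ?_
    rw [Measure.map_apply hvec hV, hvecB V hV, ← Measure.map_apply hvec hV, hmapvec]
  have hmaptest' : Measure.map test (μ[|B]) = Pmxy := hPmxy.symm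
  have hg : Measure.map (fun x => (vec x, test x)) (μ[|B]) = Qn.prod Pmxy := by
    rw [← hmapvec', ← hmaptest']
    exact (indepFun_iff_map_prod_eq_prod_map_map hvec.aemeasurable htest.aemeasurable).mp hindep'
  -- coverage identity
  set C := {x | ((s (maskOp (Xt x) (Mt x), Yt x) : ℝ) : EReal) ≤
        splitQuantile (1 - α)
          (fun i : Fin n => s (maskOp (XY i x).1 m, (XY i x).2))} with hCdef
  have hCovEq : (μ[|B]) C = (Qn.prod Pmxy) E := by
    have hBC : B ∩ C = B ∩ ((fun x => (vec x, test x)) ⁻¹' E) := by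
      ext x
      simp only [hBdef, hCdef, Set.mem_inter_iff, Set.mem_setOf_eq, Set.mem_preimage,
        hEdef, hsc0def, hvecdef, htestdef]
      constructor
      · rintro ⟨hxB, hxC⟩
        refine ⟨hxB, ?_⟩
        rw [hxB] at hxC
        exact hxC
      · rintro ⟨hxB, hxC⟩
        refine ⟨hxB, ?_⟩
        rw [hxB]
        exact hxC
    rw [cond_apply hBmeas, hBC, ← cond_apply hBmeas,
      ← Measure.map_apply (hvec.prodMk htest) hE, hg]
  -- absolute continuity
  have hac : Pmxy ≪ Pxy := by
    rw [hPmxy, hPxy]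
    exact Measure.AbsolutelyContinuous.map cond_absolutelyContinuous htest
  -- slice comparison
  set DD := tvDist Pxy Q + ∫ z, |(Pmxy.rnDeriv Pxy z).toReal - 1| ∂Pxy with hDDdef
  have hrnInt : Integrable (fun z => (Pmxy.rnDeriv Pxy z).toReal) Pxy :=
    Measure.integrable_toReal_rnDeriv
  have hslice : ∀ A : Set ((Fin d → ℝ) × ℝ), MeasurableSet A →
      |(Pmxy A).toReal - (Q A).toReal| ≤ DD := by
    intro A hA
    have h1 : |(Pmxy A).toReal - (Pxy A).toReal|
        ≤ ∫ z, |(Pmxy.rnDeriv Pxy z).toReal - 1| ∂Pxy := by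
      have e1 : (Pmxy A).toReal = ∫ z in A, (Pmxy.rnDeriv Pxy z).toReal ∂Pxy :=
        (Measure.setIntegral_toReal_rnDeriv hac A).symm
      have e2 : (Pxy A).toReal = ∫ z in A, (1:ℝ) ∂Pxy := by
        rw [setIntegral_const, smul_eq_mul, mul_one, measureReal_def]
      rw [e1, e2, ← integral_sub (hrnInt.integrableOn) (integrable_const 1)]
      calc |∫ z in A, ((Pmxy.rnDeriv Pxy z).toReal - 1) ∂Pxy|
          ≤ ∫ z in A, |(Pmxy.rnDeriv Pxy z).toReal - 1| ∂Pxy := by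
            simpa [Real.norm_eq_abs] using
              norm_integral_le_integral_norm
                (fun z => (Pmxy.rnDeriv Pxy z).toReal - 1) (μ := Pxy.restrict A)
        _ ≤ ∫ z, |(Pmxy.rnDeriv Pxy z).toReal - 1| ∂Pxy := by
            apply setIntegral_le_integral
            · exact (hrnInt.sub (integrable_const 1)).abs
            · exact ae_of_all _ fun z => abs_nonneg _
    have h2 : |(Pxy A).toReal - (Q A).toReal| ≤ tvDist Pxy Q := abs_le_tvDist Pxy Q hA
    calc |(Pmxy A).toReal - (Q A).toReal|
        ≤ |(Pmxy A).toReal - (Pxy A).toReal| + |(Pxy A).toReal - (Q A).toReal| :=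
          abs_sub_le _ _ _
      _ ≤ DD := by rw [hDDdef]; linarith
  -- product comparison
  have hmeasf : ∀ (R : Measure ((Fin d → ℝ) × ℝ)), SFinite R →
      Measurable (fun v : Fin n → (Fin d → ℝ) × ℝ => (R (Prod.mk v ⁻¹' E)).toReal) := by
    intro R hR
    haveI := hR
    exact (measurable_measure_prodMk_left hE).ennreal_toReal
  have hprodToReal : ∀ (R : Measure ((Fin d → ℝ) × ℝ)), IsProbabilityMeasure R →
      ((Qn.prod R) E).toReal
        = ∫ v, (R (Prod.mk v ⁻¹' E)).toReal ∂Qn := by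
    intro R hR
    haveI := hR
    rw [Measure.prod_apply hE]
    rw [integral_toReal (measurable_measure_prodMk_left hE).aemeasurable
      (ae_of_all _ fun v => measure_lt_top R _)]
  have hIntR : ∀ (R : Measure ((Fin d → ℝ) × ℝ)), IsProbabilityMeasure R →
      Integrable (fun v : Fin n → (Fin d → ℝ) × ℝ => (R (Prod.mk v ⁻¹' E)).toReal) Qn := by
    intro R hR
    refine Integrable.mono' (integrable_const (1:ℝ))
      ((hmeasf R inferInstance).aestronglyMeasurable) ?_
    refine ae_of_all _ fun v => ?_
    rw [Real.norm_eq_abs, abs_of_nonneg ENNReal.toReal_nonneg]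
    exact ENNReal.toReal_le_of_le_ofReal zero_le_one (by simpa using prob_le_one)
  have hprodcomp : ((Qn.prod Q) E).toReal - DD ≤ ((Qn.prod Pmxy) E).toReal := by
    rw [hprodToReal Q inferInstance, hprodToReal Pmxy inferInstance]
    have hmono : ∀ v : Fin n → (Fin d → ℝ) × ℝ,
        (Q (Prod.mk v ⁻¹' E)).toReal - DD ≤ (Pmxy (Prod.mk v ⁻¹' E)).toReal := by
      intro v
      have := hslice (Prod.mk v ⁻¹' E) (measurable_prodMk_left hE)
      have habs := abs_le.mp this
      linarith [habs.1]
    calc (∫ v, (Q (Prod.mk v ⁻¹' E)).toReal ∂Qn) - DD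
        = ∫ v, ((Q (Prod.mk v ⁻¹' E)).toReal - DD) ∂Qn := by
          rw [integral_sub (hIntR Q inferInstance) (integrable_const DD), integral_const,
            measureReal_def, measure_univ, ENNReal.toReal_one, one_smul]
      _ ≤ ∫ v, (Pmxy (Prod.mk v ⁻¹' E)).toReal ∂Qn := by
          refine integral_mono ((hIntR Q inferInstance).sub (integrable_const DD))
            (hIntR Pmxy inferInstance) ?_
          intro v
          exact hmono v
  -- coverage lower bound under Q
  have hcovQ : 1 - α ≤ ((Qn.prod Q) E).toReal := by
    have h := coverage_ge n (1-α) hβ0 hβ1 sc0 hsc0 Q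
    have : (ENNReal.ofReal (1-α)).toReal ≤ ((Qn.prod Q) E).toReal :=
      ENNReal.toReal_mono (measure_ne_top _ _) h
    rwa [ENNReal.toReal_ofReal hβ0.le] at this
  have key : 1 - α - DD ≤ ((μ[|B]) C).toReal := by
    rw [hCovEq]
    linarith
  refine ⟨key, ?_⟩
  -- MCAR case
  intro hMCAR
  have hPm_eq : Pmxy = Pxy := by
    refine Measure.ext fun A hA => ?_
    rw [hPmxy, hPxy, Measure.map_apply htest hA, Measure.map_apply htest hA,
      cond_apply hBmeas]
    have hint : B ∩ test ⁻¹' A = test ⁻¹' A ∩ Mt ⁻¹' {m} := by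
      ext x; simp only [hBdef, Set.mem_inter_iff, Set.mem_setOf_eq, Set.mem_preimage,
        Set.mem_singleton_iff, htestdef]; tauto
    rw [hint, hMCAR.measure_inter_preimage_eq_mul A {m} hA (measurableSet_singleton m)]
    have : μ (Mt ⁻¹' {m}) = μ B := rfl
    rw [this, mul_comm (μ (test ⁻¹' A)) (μ B), ← mul_assoc,
      ENNReal.inv_mul_cancel hm hBfin, one_mul]
  have hint0 : ∫ z, |(Pmxy.rnDeriv Pxy z).toReal - 1| ∂Pxy = 0 := by
    rw [hPm_eq]
    have hae : (fun z => |(Pxy.rnDeriv Pxy z).toReal - 1|) =ᵐ[Pxy] fun _ => (0:ℝ) := by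
      filter_upwards [Measure.rnDeriv_self Pxy] with z hz
      rw [hz]; simp
    rw [integral_congr_ae hae, integral_zero]
  have := key
  rw [hDDdef, hint0, add_zero] at this
  exact this
end
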